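/- arXiv:2512.18302 — 6 statements merged into one kernel-verified Lean document; each statement's English description precedes it below -/
import Mathlib

section
/- Let G be a finite group and S_0 a generating k-tuple of G. For every g ∈ G, the fiber {(g_0|g_1,…,g_k) ∈ Σ'_k(G) : g_0 = g} has cardinality equal to |Γ'_k(G)|, the cardinality of the SAut(F_k)-orbit of S_0; in particular this cardinality is independent of g, and the push-forward under π_C(g_0|g_1,…,g_k) = g_0 of the uniform distribution on Σ'_k(G) is the uniform distribution on G. -/
noncomputable section

namespace PRA

open FreeGroup

variable {α : Type*} [DecidableEq α]

/-- The endomorphism of the free group sending `x_i ↦ x_j x_i` and fixing other generators. -/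
def lA (i j : α) : FreeGroup α →* FreeGroup α :=
  FreeGroup.lift fun p => if p = i then FreeGroup.of j * FreeGroup.of p else FreeGroup.of p

/-- The endomorphism of the free group sending `x_i ↦ x_j⁻¹ x_i` and fixing other generators. -/
def lB (i j : α) : FreeGroup α →* FreeGroup α :=
  FreeGroup.lift fun p => if p = i then (FreeGroup.of j)⁻¹ * FreeGroup.of p else FreeGroup.of p

/-- The endomorphism of the free group sending `x_i ↦ x_i x_j` and fixing other generators. -/
def rA (i j : α) : FreeGroup α →* FreeGroup α :=
  FreeGroup.lift fun p => if p = i then FreeGroup.of p * FreeGroup.of j else FreeGroup.of p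

/-- The endomorphism of the free group sending `x_i ↦ x_i x_j⁻¹` and fixing other generators. -/
def rB (i j : α) : FreeGroup α →* FreeGroup α :=
  FreeGroup.lift fun p => if p = i then FreeGroup.of p * (FreeGroup.of j)⁻¹ else FreeGroup.of p

lemma lBA (i j : α) (h : i ≠ j) : (lB i j).comp (lA i j) = MonoidHom.id _ := by
  ext p
  by_cases hp : p = i
  · subst hp
    simp [lA, lB, Ne.symm h]
  · simp [lA, lB, hp]

lemma lAB (i j : α) (h : i ≠ j) : (lA i j).comp (lB i j) = MonoidHom.id _ := by
  ext p
  by_cases hp : p = i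
  · subst hp
    simp [lA, lB, Ne.symm h]
  · simp [lA, lB, hp]

lemma rBA (i j : α) (h : i ≠ j) : (rB i j).comp (rA i j) = MonoidHom.id _ := by
  ext p
  by_cases hp : p = i
  · subst hp
    simp [rA, rB, Ne.symm h]
  · simp [rA, rB, hp]

lemma rAB (i j : α) (h : i ≠ j) : (rA i j).comp (rB i j) = MonoidHom.id _ := by
  ext p
  by_cases hp : p = i
  · subst hp
    simp [rA, rB, Ne.symm h]
  · simp [rA, rB, hp]

/-- The Nielsen automorphism `L_{ij} : x_i ↦ x_j x_i` (defined to be `1` when `i = j`). -/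
def nL (i j : α) : MulAut (FreeGroup α) :=
  if h : i = j then 1
  else MonoidHom.toMulEquiv (lA i j) (lB i j) (lBA i j h) (lAB i j h)

/-- The Nielsen automorphism `R_{ij} : x_i ↦ x_i x_j` (defined to be `1` when `i = j`). -/
def nR (i j : α) : MulAut (FreeGroup α) :=
  if h : i = j then 1
  else MonoidHom.toMulEquiv (rA i j) (rB i j) (rBA i j h) (rAB i j h)

/-- The generating set of the group `A_k`: Nielsen automorphisms `L_{ij}^±`, `R_{ij}^±`
of `F_{k+1} = ⟨x_0, x_1, …, x_k⟩` with `i ≠ j` and `j ≠ 0`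
(i.e. the C-generators, with `i = 0`, and the N-generators, with `i, j ≥ 1`). -/
def AgenSet (k : ℕ) : Set (MulAut (FreeGroup (Fin (k + 1)))) :=
  {φ | ∃ i j : Fin (k + 1), i ≠ j ∧ j ≠ 0 ∧
    (φ = nL i j ∨ φ = (nL i j)⁻¹ ∨ φ = nR i j ∨ φ = (nR i j)⁻¹)}

/-- The group `A_k ≤ Aut(F_{k+1})`. -/
def Ak (k : ℕ) : Subgroup (MulAut (FreeGroup (Fin (k + 1)))) :=
  Subgroup.closure (AgenSet k)

lemma nL_mem {k : ℕ} (i j : Fin (k + 1)) (hj : j ≠ 0) : nL i j ∈ Ak k := by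
  by_cases h : i = j
  · subst h
    rw [nL, dif_pos rfl]
    exact (Ak k).one_mem
  · exact Subgroup.subset_closure ⟨i, j, h, hj, Or.inl rfl⟩

lemma nR_mem {k : ℕ} (i j : Fin (k + 1)) (hj : j ≠ 0) : nR i j ∈ Ak k := by
  by_cases h : i = j
  · subst h
    rw [nR, dif_pos rfl]
    exact (Ak k).one_mem
  · exact Subgroup.subset_closure ⟨i, j, h, hj, Or.inr (Or.inr (Or.inl rfl))⟩

/-- `L_{ij}` as an element of the group `A_k`. -/
def Lg {k : ℕ} (i j : Fin (k + 1)) (hj : j ≠ 0) : Ak k := ⟨nL i j, nL_mem i j hj⟩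

/-- `R_{ij}` as an element of the group `A_k`. -/
def Rg {k : ℕ} (i j : Fin (k + 1)) (hj : j ≠ 0) : Ak k := ⟨nR i j, nR_mem i j hj⟩

end PRA
namespace PRA

open FreeGroup

variable {k : ℕ} {G : Type*} [Group G]

/-- The action of an automorphism `ψ` of `F_{k+1}` on `(k+1)`-tuples of elements of `G`
(identified with homomorphisms `F_{k+1} → G`): `(ψ.g) i = (lift g) (ψ⁻¹ x_i)`. -/
def tupAct (ψ : MulAut (FreeGroup (Fin (k + 1)))) (g : Fin (k + 1) → G) : Fin (k + 1) → G :=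
  fun i => FreeGroup.lift g (ψ⁻¹ (FreeGroup.of i))

/-- The initial tuple `(1 | S_0)`. -/
def initTup (k : ℕ) (S0 : Fin k → G) : Fin (k + 1) → G :=
  Fin.cases 1 S0

/-- The vertex set of `Σ'_k(G)`: the orbit of `(1|S_0)` under the action of `A_k`. -/
def SigmaSet (k : ℕ) (G : Type*) [Group G] (S0 : Fin k → G) : Set (Fin (k + 1) → G) :=
  {v | ∃ ψ ∈ Ak k, v = tupAct ψ (initTup k S0)}

/-- The list of `4k²` generators of `A_k`, indexed by a label `c : Fin 4`
(for `L, L⁻¹, R, R⁻¹`) and a pair of indices. -/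
def genAut (k : ℕ) (c : Fin 4) (i j : Fin (k + 1)) : MulAut (FreeGroup (Fin (k + 1))) :=
  ![nL i j, (nL i j)⁻¹, nR i j, (nR i j)⁻¹] c

/-- The distribution `μ_t` of the lazy random walk on `Σ'_k(G)` started at `(1|S_0)`;
in one step, with probability `1/2` stay put, with probability `1/2` move along one
of the `4k²` edges chosen uniformly. -/
def walkDist (k : ℕ) (G : Type*) [Group G] [Fintype G] [DecidableEq G] (S0 : Fin k → G) :
    ℕ → (Fin (k + 1) → G) → ℝ
  | 0, v => if v = initTup k S0 then 1 else 0
  | t + 1, v =>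
      (1 / 2) * walkDist k G S0 t v +
        (1 / (8 * (k : ℝ) ^ 2)) *
          ∑ c : Fin 4, ∑ i : Fin (k + 1), ∑ j : Fin (k + 1),
            if i ≠ j ∧ j ≠ 0 then walkDist k G S0 t (tupAct (genAut k c i j)⁻¹ v) else 0

open scoped Classical in
/-- The distribution `ν_t` of the accumulator:
`ν_t(g) = μ_t {(g_0|g_1,…,g_k) ∈ Σ'_k(G) : g_0 = g}`. -/
def accDist (k : ℕ) (G : Type*) [Group G] [Fintype G] [DecidableEq G] (S0 : Fin k → G)
    (t : ℕ) (g : G) : ℝ :=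
  ∑ v : Fin (k + 1) → G,
    if v ∈ SigmaSet k G S0 ∧ v 0 = g then walkDist k G S0 t v else 0

/-- The total variation distance between two (distributions given as) functions
on a finite set: `(1/2)·Σ_x |μ x − ν x|`. -/
def tvDist {X : Type*} [Fintype X] (μ ν : X → ℝ) : ℝ :=
  (∑ x : X, |μ x - ν x|) / 2

/-- The uniform distribution on a finite group `G`. -/
def unifG (G : Type*) [Group G] [Fintype G] : G → ℝ :=
  fun _ => (Fintype.card G : ℝ)⁻¹

open scoped Classical in
/-- The uniform distribution on `Σ'_k(G)`, as a function on all `(k+1)`-tuples. -/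
def unifSigma (k : ℕ) (G : Type*) [Group G] [Fintype G] (S0 : Fin k → G) :
    (Fin (k + 1) → G) → ℝ :=
  fun v => if v ∈ SigmaSet k G S0 then ((SigmaSet k G S0).ncard : ℝ)⁻¹ else 0

end PRA
namespace PRA

/-- The generating set of `SAut(F_k)`: the Nielsen automorphisms `L_{ij}^±`, `R_{ij}^±` of
`F_k = ⟨x_1,…,x_k⟩` for `i ≠ j`. -/
def SAutGenSet (k : ℕ) : Set (MulAut (FreeGroup (Fin k))) :=
  {φ | ∃ i j : Fin k, i ≠ j ∧
    (φ = nL i j ∨ φ = (nL i j)⁻¹ ∨ φ = nR i j ∨ φ = (nR i j)⁻¹)}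

/-- The group `SAut(F_k) ≤ Aut(F_k)` generated by the Nielsen automorphisms. -/
def SAutk (k : ℕ) : Subgroup (MulAut (FreeGroup (Fin k))) :=
  Subgroup.closure (SAutGenSet k)

variable {k : ℕ} {G : Type*} [Group G]

/-- The action of an automorphism `ψ` of `F_k` on `k`-tuples of elements of `G`
(identified with homomorphisms `F_k → G`): `(ψ.S) i = (lift S) (ψ⁻¹ x_i)`. -/
def tupActN (ψ : MulAut (FreeGroup (Fin k))) (S : Fin k → G) : Fin k → G :=
  fun i => FreeGroup.lift S (ψ⁻¹ (FreeGroup.of i))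

/-- The vertex set of `Γ'_k(G)`: the orbit of `S_0` under the action of `SAut(F_k)`. -/
def GammaSet (k : ℕ) (G : Type*) [Group G] (S0 : Fin k → G) : Set (Fin k → G) :=
  {S | ∃ ψ ∈ SAutk k, S = tupActN ψ S0}

end PRA
namespace PRA

open FreeGroup

section Generic
variable {α : Type*} [DecidableEq α]

lemma nL_of (i j p : α) (h : i ≠ j) :
    nL i j (of p) = if p = i then of j * of p else of p := by
  rw [nL, dif_neg h, MonoidHom.toMulEquiv_apply]; simp [lA]

lemma nL_inv_of (i j p : α) (h : i ≠ j) :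
    (nL i j)⁻¹ (of p) = if p = i then (of j)⁻¹ * of p else of p := by
  rw [nL, dif_neg h, MulAut.inv_def, MonoidHom.toMulEquiv_symm_apply]; simp [lB]

lemma nR_of (i j p : α) (h : i ≠ j) :
    nR i j (of p) = if p = i then of p * of j else of p := by
  rw [nR, dif_neg h, MonoidHom.toMulEquiv_apply]; simp [rA]

lemma nR_inv_of (i j p : α) (h : i ≠ j) :
    (nR i j)⁻¹ (of p) = if p = i then of p * (of j)⁻¹ else of p := by
  rw [nR, dif_neg h, MulAut.inv_def, MonoidHom.toMulEquiv_symm_apply]; simp [rB]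

end Generic

section ActN
variable {k : ℕ} {G : Type*} [Group G]

lemma tupActN_one (S : Fin k → G) : tupActN 1 S = S := by
  funext i; simp [tupActN]

lemma lift_tupActN (ψ : MulAut (FreeGroup (Fin k))) (S : Fin k → G) :
    FreeGroup.lift (tupActN ψ S) = (FreeGroup.lift S).comp (ψ⁻¹ : MulAut (FreeGroup (Fin k))).toMonoidHom := by
  apply FreeGroup.ext_hom
  intro a
  simp [tupActN]

lemma tupActN_mul (ψ φ : MulAut (FreeGroup (Fin k))) (S : Fin k → G) :
    tupActN (ψ * φ) S = tupActN ψ (tupActN φ S) := by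
  funext i
  show _ = FreeGroup.lift (tupActN φ S) (ψ⁻¹ (of i))
  rw [lift_tupActN]
  simp [tupActN, mul_inv_rev]

lemma tupActN_nL (i j : Fin k) (h : i ≠ j) (S : Fin k → G) :
    tupActN (nL i j) S = fun p => if p = i then (S j)⁻¹ * S p else S p := by
  funext p
  rw [tupActN, nL_inv_of i j p h]
  split <;> simp

lemma tupActN_nL_inv (i j : Fin k) (h : i ≠ j) (S : Fin k → G) :
    tupActN (nL i j)⁻¹ S = fun p => if p = i then S j * S p else S p := by
  funext p
  rw [tupActN, inv_inv, nL_of i j p h]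
  split <;> simp

lemma tupActN_nR (i j : Fin k) (h : i ≠ j) (S : Fin k → G) :
    tupActN (nR i j) S = fun p => if p = i then S p * (S j)⁻¹ else S p := by
  funext p
  rw [tupActN, nR_inv_of i j p h]
  split <;> simp

lemma tupActN_nR_inv (i j : Fin k) (h : i ≠ j) (S : Fin k → G) :
    tupActN (nR i j)⁻¹ S = fun p => if p = i then S p * S j else S p := by
  funext p
  rw [tupActN, inv_inv, nR_of i j p h]
  split <;> simp

end ActN

end PRA
namespace PRA

open FreeGroup

section Succ
variable {k : ℕ} {G : Type*} [Group G]

lemma succ_ne (i j : Fin k) (h : i ≠ j) : i.succ ≠ j.succ := fun e => h (Fin.succ_inj.mp e)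

lemma cases_nL (i j : Fin k) (h : i ≠ j) (g : G) (S : Fin k → G) :
    tupActN (nL i.succ j.succ) (Fin.cases g S) = Fin.cases g (tupActN (nL i j) S) := by
  rw [tupActN_nL _ _ (succ_ne i j h), tupActN_nL _ _ h]
  funext q
  induction q using Fin.cases with
  | zero => simp [(Fin.succ_ne_zero i).symm]
  | succ p => simp [Fin.succ_inj]

lemma cases_nL_inv (i j : Fin k) (h : i ≠ j) (g : G) (S : Fin k → G) :
    tupActN (nL i.succ j.succ)⁻¹ (Fin.cases g S) = Fin.cases g (tupActN (nL i j)⁻¹ S) := by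
  rw [tupActN_nL_inv _ _ (succ_ne i j h), tupActN_nL_inv _ _ h]
  funext q
  induction q using Fin.cases with
  | zero => simp [(Fin.succ_ne_zero i).symm]
  | succ p => simp [Fin.succ_inj]

lemma cases_nR (i j : Fin k) (h : i ≠ j) (g : G) (S : Fin k → G) :
    tupActN (nR i.succ j.succ) (Fin.cases g S) = Fin.cases g (tupActN (nR i j) S) := by
  rw [tupActN_nR _ _ (succ_ne i j h), tupActN_nR _ _ h]
  funext q
  induction q using Fin.cases with
  | zero => simp [(Fin.succ_ne_zero i).symm]
  | succ p => simp [Fin.succ_inj]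

lemma cases_nR_inv (i j : Fin k) (h : i ≠ j) (g : G) (S : Fin k → G) :
    tupActN (nR i.succ j.succ)⁻¹ (Fin.cases g S) = Fin.cases g (tupActN (nR i j)⁻¹ S) := by
  rw [tupActN_nR_inv _ _ (succ_ne i j h), tupActN_nR_inv _ _ h]
  funext q
  induction q using Fin.cases with
  | zero => simp [(Fin.succ_ne_zero i).symm]
  | succ p => simp [Fin.succ_inj]

lemma cases_nL0 (j : Fin k) (g : G) (S : Fin k → G) :
    tupActN (nL (0 : Fin (k + 1)) j.succ) (Fin.cases g S) = Fin.cases ((S j)⁻¹ * g) S := by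
  rw [tupActN_nL _ _ (Fin.succ_ne_zero j).symm]
  funext q
  induction q using Fin.cases with
  | zero => simp
  | succ p => simp [Fin.succ_ne_zero p]

lemma cases_nL0_inv (j : Fin k) (g : G) (S : Fin k → G) :
    tupActN (nL (0 : Fin (k + 1)) j.succ)⁻¹ (Fin.cases g S) = Fin.cases (S j * g) S := by
  rw [tupActN_nL_inv _ _ (Fin.succ_ne_zero j).symm]
  funext q
  induction q using Fin.cases with
  | zero => simp
  | succ p => simp [Fin.succ_ne_zero p]

lemma cases_nR0 (j : Fin k) (g : G) (S : Fin k → G) :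
    tupActN (nR (0 : Fin (k + 1)) j.succ) (Fin.cases g S) = Fin.cases (g * (S j)⁻¹) S := by
  rw [tupActN_nR _ _ (Fin.succ_ne_zero j).symm]
  funext q
  induction q using Fin.cases with
  | zero => simp
  | succ p => simp [Fin.succ_ne_zero p]

lemma cases_nR0_inv (j : Fin k) (g : G) (S : Fin k → G) :
    tupActN (nR (0 : Fin (k + 1)) j.succ)⁻¹ (Fin.cases g S) = Fin.cases (g * S j) S := by
  rw [tupActN_nR_inv _ _ (Fin.succ_ne_zero j).symm]
  funext q
  induction q using Fin.cases with
  | zero => simp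
  | succ p => simp [Fin.succ_ne_zero p]

end Succ

end PRA
namespace PRA

open FreeGroup

section Orbits
variable {k : ℕ} {G : Type*} [Group G]

lemma nL_memS (i j : Fin k) : nL i j ∈ SAutk k := by
  by_cases h : i = j
  · subst h; rw [nL, dif_pos rfl]; exact (SAutk k).one_mem
  · exact Subgroup.subset_closure ⟨i, j, h, Or.inl rfl⟩

lemma nR_memS (i j : Fin k) : nR i j ∈ SAutk k := by
  by_cases h : i = j
  · subst h; rw [nR, dif_pos rfl]; exact (SAutk k).one_mem
  · exact Subgroup.subset_closure ⟨i, j, h, Or.inr (Or.inr (Or.inl rfl))⟩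

lemma gamma_act {S0 : Fin k → G} {ψ : MulAut (FreeGroup (Fin k))} (hψ : ψ ∈ SAutk k)
    {S : Fin k → G} (hS : S ∈ GammaSet k G S0) : tupActN ψ S ∈ GammaSet k G S0 := by
  obtain ⟨φ, hφ, rfl⟩ := hS
  exact ⟨ψ * φ, mul_mem hψ hφ, (tupActN_mul ψ φ S0).symm⟩

lemma S0_mem_gamma (S0 : Fin k → G) : S0 ∈ GammaSet k G S0 :=
  ⟨1, one_mem _, (tupActN_one S0).symm⟩

/-- The product set `G × Γ'_k(G)` inside `(k+1)`-tuples. -/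
def ProdSet (k : ℕ) (G : Type*) [Group G] (S0 : Fin k → G) : Set (Fin (k + 1) → G) :=
  {v | ∃ g S, S ∈ GammaSet k G S0 ∧ v = Fin.cases g S}

lemma gen_maps {S0 : Fin k → G} (i j : Fin (k + 1)) (hij : i ≠ j) (hj : j ≠ 0)
    (φ : MulAut (FreeGroup (Fin (k + 1))))
    (hφ : φ = nL i j ∨ φ = (nL i j)⁻¹ ∨ φ = nR i j ∨ φ = (nR i j)⁻¹) :
    ∀ v ∈ ProdSet k G S0, tupActN φ v ∈ ProdSet k G S0 := by
  rintro v ⟨g, S, hS, rfl⟩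
  obtain ⟨j', rfl⟩ := Fin.exists_succ_eq.mpr hj
  rcases eq_or_ne i 0 with rfl | hi
  · rcases hφ with rfl | rfl | rfl | rfl
    · rw [cases_nL0]; exact ⟨_, S, hS, rfl⟩
    · rw [cases_nL0_inv]; exact ⟨_, S, hS, rfl⟩
    · rw [cases_nR0]; exact ⟨_, S, hS, rfl⟩
    · rw [cases_nR0_inv]; exact ⟨_, S, hS, rfl⟩
  · obtain ⟨i', rfl⟩ := Fin.exists_succ_eq.mpr hi
    have hij' : i' ≠ j' := fun e => hij (by rw [e])
    rcases hφ with rfl | rfl | rfl | rfl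
    · rw [cases_nL i' j' hij']; exact ⟨g, _, gamma_act (nL_memS i' j') hS, rfl⟩
    · rw [cases_nL_inv i' j' hij']
      exact ⟨g, _, gamma_act (inv_mem (nL_memS i' j')) hS, rfl⟩
    · rw [cases_nR i' j' hij']; exact ⟨g, _, gamma_act (nR_memS i' j') hS, rfl⟩
    · rw [cases_nR_inv i' j' hij']
      exact ⟨g, _, gamma_act (inv_mem (nR_memS i' j')) hS, rfl⟩

lemma sigma_subset_prod (S0 : Fin k → G) : SigmaSet k G S0 ⊆ ProdSet k G S0 := by
  rintro v ⟨ψ, hψ, rfl⟩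
  have key : ∀ ψ ∈ Ak k, (∀ v ∈ ProdSet k G S0, tupActN ψ v ∈ ProdSet k G S0) ∧
      (∀ v ∈ ProdSet k G S0, tupActN ψ⁻¹ v ∈ ProdSet k G S0) := by
    intro ψ hψ
    have hψ' : ψ ∈ Subgroup.closure (AgenSet k) := hψ
    clear hψ
    induction hψ' using Subgroup.closure_induction with
    | mem x hx =>
      obtain ⟨i, j, hij, hj, hc⟩ := hx
      refine ⟨gen_maps i j hij hj x hc, gen_maps i j hij hj x⁻¹ ?_⟩
      rcases hc with rfl | rfl | rfl | rfl
      · exact Or.inr (Or.inl rfl)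
      · exact Or.inl (by rw [inv_inv])
      · exact Or.inr (Or.inr (Or.inr rfl))
      · exact Or.inr (Or.inr (Or.inl (by rw [inv_inv])))
    | one =>
      constructor <;> intro v hv <;> simpa [tupActN_one] using hv
    | mul x y hx hy ihx ihy =>
      constructor
      · intro v hv
        rw [tupActN_mul]
        exact ihx.1 _ (ihy.1 _ hv)
      · intro v hv
        rw [mul_inv_rev, tupActN_mul]
        exact ihy.2 _ (ihx.2 _ hv)
    | inv x hx ih =>
      exact ⟨ih.2, by simpa using ih.1⟩
  exact (key ψ hψ).1 _ ⟨1, S0, S0_mem_gamma S0, rfl⟩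

end Orbits

end PRA
namespace PRA

open FreeGroup

section Converse
variable {k : ℕ} {G : Type*} [Group G]

lemma exists_lift (φ : MulAut (FreeGroup (Fin k))) (hφ : φ ∈ SAutk k) :
    ∃ ψ ∈ Ak k, ∀ (g : G) (S : Fin k → G),
      tupActN ψ (Fin.cases g S) = Fin.cases g (tupActN φ S) := by
  have hφ' : φ ∈ Subgroup.closure (SAutGenSet k) := hφ
  clear hφ
  induction hφ' using Subgroup.closure_induction with
  | mem x hx =>
    obtain ⟨i, j, hij, hc⟩ := hx
    rcases hc with rfl | rfl | rfl | rfl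
    · exact ⟨nL i.succ j.succ, nL_mem _ _ (Fin.succ_ne_zero j),
        fun g S => cases_nL i j hij g S⟩
    · exact ⟨(nL i.succ j.succ)⁻¹, inv_mem (nL_mem _ _ (Fin.succ_ne_zero j)),
        fun g S => cases_nL_inv i j hij g S⟩
    · exact ⟨nR i.succ j.succ, nR_mem _ _ (Fin.succ_ne_zero j),
        fun g S => cases_nR i j hij g S⟩
    · exact ⟨(nR i.succ j.succ)⁻¹, inv_mem (nR_mem _ _ (Fin.succ_ne_zero j)),
        fun g S => cases_nR_inv i j hij g S⟩
  | one =>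
    exact ⟨1, one_mem _, fun g S => by rw [tupActN_one, tupActN_one]⟩
  | mul x y hx hy ihx ihy =>
    obtain ⟨ψx, hψx, ex⟩ := ihx
    obtain ⟨ψy, hψy, ey⟩ := ihy
    exact ⟨ψx * ψy, mul_mem hψx hψy, fun g S => by
      rw [tupActN_mul, ey, ex, tupActN_mul]⟩
  | inv x hx ih =>
    obtain ⟨ψ, hψ, e⟩ := ih
    refine ⟨ψ⁻¹, inv_mem hψ, fun g S => ?_⟩
    have h1 : tupActN ψ (Fin.cases g (tupActN x⁻¹ S)) = Fin.cases g S := by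
      rw [e, ← tupActN_mul, mul_inv_cancel, tupActN_one]
    rw [← h1, ← tupActN_mul, inv_mul_cancel, tupActN_one]

lemma closure_range_eq (φ : MulAut (FreeGroup (Fin k))) (S0 : Fin k → G) :
    Subgroup.closure (Set.range (tupActN φ S0)) = Subgroup.closure (Set.range S0) := by
  have h1 : ∀ T : Fin k → G, Subgroup.closure (Set.range T) = (FreeGroup.lift T).range := by
    intro T
    have hT : Set.range T = FreeGroup.lift T '' Set.range of := by
      conv_lhs => rw [show T = ⇑(FreeGroup.lift T) ∘ of from funext fun i => by simp]
      rw [Set.range_comp]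
    rw [hT, ← MonoidHom.map_closure, FreeGroup.closure_range_of, ← MonoidHom.range_eq_map]
  rw [h1, h1, lift_tupActN, MonoidHom.range_comp]
  congr 1
  have : ((φ⁻¹ : MulAut (FreeGroup (Fin k))).toMonoidHom).range = ⊤ :=
    MonoidHom.range_eq_top.mpr (φ⁻¹ : MulAut (FreeGroup (Fin k))).surjective
  rw [this, ← MonoidHom.range_eq_map]

lemma reach (S : Fin k → G) (hS : Subgroup.closure (Set.range S) = ⊤) (g : G) :
    ∃ χ ∈ Ak k, tupActN χ (Fin.cases (1 : G) S) = Fin.cases g S := by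
  set R : G → Prop := fun g => ∃ χ ∈ Ak k, tupActN χ (Fin.cases (1 : G) S) = Fin.cases g S
    with hR
  have key : ∀ h ∈ Subgroup.closure (Set.range S),
      (∀ g, R g → R (h * g)) ∧ (∀ g, R g → R (h⁻¹ * g)) := by
    intro h hh
    induction hh using Subgroup.closure_induction with
    | mem x hx =>
      obtain ⟨j, rfl⟩ := hx
      constructor
      · rintro g ⟨χ, hχ, e⟩
        refine ⟨(nL (0 : Fin (k + 1)) j.succ)⁻¹ * χ,
          mul_mem (inv_mem (nL_mem _ _ (Fin.succ_ne_zero j))) hχ, ?_⟩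
        rw [tupActN_mul, e, cases_nL0_inv]
      · rintro g ⟨χ, hχ, e⟩
        refine ⟨nL (0 : Fin (k + 1)) j.succ * χ,
          mul_mem (nL_mem _ _ (Fin.succ_ne_zero j)) hχ, ?_⟩
        rw [tupActN_mul, e, cases_nL0]
    | one => constructor <;> intro g hg <;> simpa using hg
    | mul x y hx hy ihx ihy =>
      constructor
      · intro g hg
        rw [mul_assoc]
        exact ihx.1 _ (ihy.1 _ hg)
      · intro g hg
        rw [mul_inv_rev, mul_assoc]
        exact ihy.2 _ (ihx.2 _ hg)
    | inv x hx ih => exact ⟨ih.2, by simpa using ih.1⟩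
  have hg : g ∈ Subgroup.closure (Set.range S) := by rw [hS]; trivial
  have h1 : R 1 := ⟨1, one_mem _, by rw [tupActN_one]⟩
  simpa using (key g hg).1 1 h1

lemma prod_subset_sigma (S0 : Fin k → G) (hS0 : Subgroup.closure (Set.range S0) = ⊤) :
    ProdSet k G S0 ⊆ SigmaSet k G S0 := by
  rintro v ⟨g, S, ⟨φ, hφ, rfl⟩, rfl⟩
  obtain ⟨ψ, hψ, e⟩ := exists_lift (G := G) φ hφ
  have hgen : Subgroup.closure (Set.range (tupActN φ S0)) = ⊤ := by
    rw [closure_range_eq, hS0]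
  obtain ⟨χ, hχ, e2⟩ := reach (tupActN φ S0) hgen g
  refine ⟨χ * ψ, mul_mem hχ hψ, ?_⟩
  show _ = tupActN (χ * ψ) (initTup k S0)
  rw [tupActN_mul]
  show _ = tupActN χ (tupActN ψ (Fin.cases 1 S0))
  rw [e, e2]

lemma sigma_eq_prod (S0 : Fin k → G) (hS0 : Subgroup.closure (Set.range S0) = ⊤) :
    SigmaSet k G S0 = ProdSet k G S0 :=
  le_antisymm (sigma_subset_prod S0) (prod_subset_sigma S0 hS0)

end Converse

end PRA
namespace PRA

open FreeGroup

section Counting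
variable {k : ℕ} {G : Type*} [Group G] [Fintype G]

lemma cases_injective (g : G) :
    Function.Injective (fun S : Fin k → G => (Fin.cases g S : Fin (k + 1) → G)) := by
  intro S S' h
  funext p
  have := congrFun h p.succ
  simpa using this

lemma prod_cases_injective :
    Function.Injective (fun p : G × (Fin k → G) => (Fin.cases p.1 p.2 : Fin (k + 1) → G)) := by
  rintro ⟨g, S⟩ ⟨g', S'⟩ h
  have h0 := congrFun h 0
  simp only [Fin.cases_zero] at h0
  have hs : S = S' := by
    funext p
    have := congrFun h p.succ
    simpa using this
  simp [h0, hs]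

lemma fiber_eq (S0 : Fin k → G) (hS0 : Subgroup.closure (Set.range S0) = ⊤) (g : G) :
    {v | v ∈ SigmaSet k G S0 ∧ v 0 = g} =
      (fun S : Fin k → G => (Fin.cases g S : Fin (k + 1) → G)) '' GammaSet k G S0 := by
  ext v
  constructor
  · rintro ⟨hv, h0⟩
    obtain ⟨g', S, hS, rfl⟩ := sigma_subset_prod S0 hv
    simp only [Fin.cases_zero] at h0
    subst h0
    exact ⟨S, hS, rfl⟩
  · rintro ⟨S, hS, rfl⟩
    exact ⟨prod_subset_sigma S0 hS0 ⟨g, S, hS, rfl⟩, by simp⟩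

lemma fiber_ncard (S0 : Fin k → G) (hS0 : Subgroup.closure (Set.range S0) = ⊤) (g : G) :
    {v | v ∈ SigmaSet k G S0 ∧ v 0 = g}.ncard = (GammaSet k G S0).ncard := by
  rw [fiber_eq S0 hS0 g, Set.ncard_image_of_injective _ (cases_injective g)]

lemma sigma_ncard (S0 : Fin k → G) (hS0 : Subgroup.closure (Set.range S0) = ⊤) :
    (SigmaSet k G S0).ncard = Fintype.card G * (GammaSet k G S0).ncard := by
  rw [sigma_eq_prod S0 hS0]
  have hP : ProdSet k G S0 =
      (fun p : G × (Fin k → G) => (Fin.cases p.1 p.2 : Fin (k + 1) → G)) ''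
        (Set.univ ×ˢ GammaSet k G S0) := by
    ext v
    constructor
    · rintro ⟨g, S, hS, rfl⟩
      exact ⟨(g, S), ⟨trivial, hS⟩, rfl⟩
    · rintro ⟨⟨g, S⟩, ⟨-, hS⟩, rfl⟩
      exact ⟨g, S, hS, rfl⟩
  rw [hP, Set.ncard_image_of_injective _ prod_cases_injective,
    ← Nat.card_coe_set_eq, Nat.card_congr (Equiv.Set.prod _ _), Nat.card_prod,
    Nat.card_congr (Equiv.Set.univ G), Nat.card_eq_fintype_card, Nat.card_coe_set_eq]

lemma gamma_ncard_pos (S0 : Fin k → G) : 0 < (GammaSet k G S0).ncard :=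
  (Set.ncard_pos (Set.toFinite _)).mpr ⟨S0, S0_mem_gamma S0⟩

end Counting

end PRA
open PRA in
open scoped Classical in
/-- For every `g ∈ G`, the fiber `{v ∈ Σ'_k(G) : v_0 = g}` has cardinality
`|Γ'_k(G)|` (in particular the cardinality is independent of `g`), and the push-forward of the
uniform distribution on `Σ'_k(G)` under `π_C(g_0|g_1,…,g_k) = g_0` is the uniform
distribution on `G`. -/
theorem statement10 (k : ℕ) (G : Type*) [Group G] [Fintype G]
    (S0 : Fin k → G) (hS0 : Subgroup.closure (Set.range S0) = ⊤) :
    (∀ g : G, {v ∈ SigmaSet k G S0 | v 0 = g}.ncard = (GammaSet k G S0).ncard) ∧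
      ∀ g : G,
        (∑ v : Fin (k + 1) → G,
          if v ∈ SigmaSet k G S0 ∧ v 0 = g then ((SigmaSet k G S0).ncard : ℝ)⁻¹ else 0)
          = (Fintype.card G : ℝ)⁻¹ := by
  have hfib : ∀ g : G, {v ∈ SigmaSet k G S0 | v 0 = g}.ncard = (GammaSet k G S0).ncard :=
    fun g => fiber_ncard S0 hS0 g
  refine ⟨hfib, fun g => ?_⟩
  rw [← Finset.sum_filter, Finset.sum_const, nsmul_eq_mul]
  have hcard : (Finset.univ.filter
      (fun v : Fin (k + 1) → G => v ∈ SigmaSet k G S0 ∧ v 0 = g)).card =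
      {v | v ∈ SigmaSet k G S0 ∧ v 0 = g}.ncard := by
    rw [Set.ncard_eq_toFinset_card', Set.toFinset_setOf]
  rw [hcard]
  have h1 : {v | v ∈ SigmaSet k G S0 ∧ v 0 = g}.ncard = (GammaSet k G S0).ncard := hfib g
  rw [h1, sigma_ncard S0 hS0]
  have hGamma : ((GammaSet k G S0).ncard : ℝ) ≠ 0 := by
    exact_mod_cast (gamma_ncard_pos S0).ne'
  have hG : (Fintype.card G : ℝ) ≠ 0 := by
    exact_mod_cast Fintype.card_ne_zero
  push_cast
  field_simp
end
end

section
/- For every k ≥ 1, the group A_k is isomorphic to the semidirect product (F_k × F_k) ⋊ SAut(F_k), where SAut(F_k) acts on F_k × F_k coordinatewise via the canonical action of automorphisms on the free group: φ.(l, r) = (φ(l), φ(r)). -/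
noncomputable section

namespace PRA

/-- The coordinatewise (diagonal) action of `SAut(F_k)` on `F_k × F_k`,
`φ.(l, r) = (φ(l), φ(r))`, as a homomorphism into the automorphism group. -/
def diagAct (k : ℕ) : SAutk k →* MulAut (FreeGroup (Fin k) × FreeGroup (Fin k)) where
  toFun φ := MulEquiv.prodCongr (φ : MulAut (FreeGroup (Fin k))) (φ : MulAut (FreeGroup (Fin k)))
  map_one' := by ext x <;> rfl
  map_mul' a b := by ext x <;> rfl

end PRA

namespace PRA

/-! ### Auxiliary results -/

section TorsionFree

/-- If two elements of a free group commute... helper: square trivial implies trivial. -/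
lemma freeGroup_subsingleton {α : Type} (h : ¬ Nonempty α) (w : FreeGroup α) : w = 1 := by
  induction w using FreeGroup.induction_on with
  | C1 => rfl
  | of x => exact absurd ⟨x⟩ h
  | inv_of x _ => exact absurd ⟨x⟩ h
  | mul x y hx hy => rw [hx, hy, one_mul]

lemma freeGroupUnit_sq {z : FreeGroup Unit} (h : z * z = 1) : z = 1 := by
  have hS : ∀ w : FreeGroup Unit, FreeGroup.freeGroupUnitEquivInt w
      = FreeGroup.sum ((FreeGroup.map (fun _ => (1 : ℤ))) w) := fun w => rfl
  have h2 : FreeGroup.freeGroupUnitEquivInt z = 0 := by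
    have h1 := congrArg FreeGroup.freeGroupUnitEquivInt h
    rw [hS, hS, map_mul, FreeGroup.sum.map_mul, map_one, FreeGroup.sum.map_one] at h1
    rw [hS]
    omega
  have h3 := FreeGroup.freeGroupUnitEquivInt.symm_apply_apply z
  rw [h2] at h3
  have h4 : FreeGroup.freeGroupUnitEquivInt.symm 0 = FreeGroup.of () ^ (0 : ℤ) := rfl
  rw [h4, zpow_zero] at h3
  exact h3.symm

lemma freeGroup_sq_eq_one {α : Type} {x : FreeGroup α} (h : x * x = 1) : x = 1 := by
  classical
  set H := Subgroup.zpowers x with hH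
  haveI : IsFreeGroup ↥H := inferInstance
  haveI hsub : Subsingleton (IsFreeGroup.Generators ↥H) := by
    by_contra hns
    rw [not_subsingleton_iff_nontrivial] at hns
    obtain ⟨a, b, hab⟩ := hns.exists_pair_ne
    set u : Equiv.Perm (Fin 3) := Equiv.swap 0 1 with hu
    set v : Equiv.Perm (Fin 3) := Equiv.swap 1 2 with hv
    let f : ↥H →* Equiv.Perm (Fin 3) := IsFreeGroup.lift (fun c => if c = a then u else v)
    have hcomm : IsFreeGroup.of (G := ↥H) a * IsFreeGroup.of b
        = IsFreeGroup.of b * IsFreeGroup.of a := mul_comm' _ _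
    have h1 : f (IsFreeGroup.of a * IsFreeGroup.of b) = u * v := by
      rw [map_mul, IsFreeGroup.lift_of, IsFreeGroup.lift_of, if_pos rfl, if_neg (Ne.symm hab)]
    have h2 : f (IsFreeGroup.of b * IsFreeGroup.of a) = v * u := by
      rw [map_mul, IsFreeGroup.lift_of, IsFreeGroup.lift_of, if_pos rfl, if_neg (Ne.symm hab)]
    have h3 : u * v = v * u := by rw [← h1, ← h2, hcomm]
    have h4 : u * v ≠ v * u := by rw [hu, hv]; decide
    exact h4 h3
  have hx : (⟨x, Subgroup.mem_zpowers x⟩ : ↥H) * ⟨x, Subgroup.mem_zpowers x⟩ = 1 :=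
    Subtype.ext h
  set y := IsFreeGroup.toFreeGroup (G := ↥H) ⟨x, Subgroup.mem_zpowers x⟩ with hy
  have hyy : y * y = 1 := by rw [hy, ← map_mul, hx, map_one]
  have hy1 : y = 1 := by
    by_cases hne : Nonempty (IsFreeGroup.Generators ↥H)
    · obtain ⟨b0⟩ := hne
      let m1 : FreeGroup (IsFreeGroup.Generators ↥H) →* FreeGroup Unit :=
        FreeGroup.map (fun _ => ())
      let m2 : FreeGroup Unit →* FreeGroup (IsFreeGroup.Generators ↥H) :=
        FreeGroup.map (fun _ => b0)
      have hm : m2.comp m1 = MonoidHom.id _ := FreeGroup.ext_hom _ _ (fun a => by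
        simp only [MonoidHom.comp_apply, MonoidHom.id_apply, m1, m2, FreeGroup.map.of]
        exact congrArg FreeGroup.of (Subsingleton.elim _ _))
      have hz : m1 y * m1 y = 1 := by rw [← map_mul, hyy, map_one]
      have hz1 : m1 y = 1 := freeGroupUnit_sq hz
      calc y = m2 (m1 y) := (DFunLike.congr_fun hm y).symm
        _ = 1 := by rw [hz1, map_one]
    · exact freeGroup_subsingleton hne y
  have : (⟨x, Subgroup.mem_zpowers x⟩ : ↥H) = 1 :=
    (IsFreeGroup.toFreeGroup (G := ↥H)).injective (by rw [← hy, hy1, map_one])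
  exact congrArg Subtype.val this

end TorsionFree

section Main

variable {α : Type*} [DecidableEq α]

omit [DecidableEq α] in
lemma mulAut_ext {f g : MulAut (FreeGroup α)}
    (h : ∀ a, f (FreeGroup.of a) = g (FreeGroup.of a)) : f = g :=
  MulEquiv.toMonoidHom_injective (FreeGroup.ext_hom _ _ h)

variable (k : ℕ)

/-- Inclusion `F_k →* F_{k+1}` on generators `x_i ↦ x_{i+1}`. -/
def iota : FreeGroup (Fin k) →* FreeGroup (Fin (k + 1)) := FreeGroup.map Fin.succ

@[simp] lemma iota_of (i : Fin k) : iota k (FreeGroup.of i) = FreeGroup.of i.succ :=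
  FreeGroup.map.of

/-- Retraction `F_{k+1} →* F_k` killing `x_0`. -/
def piH : FreeGroup (Fin (k + 1)) →* FreeGroup (Fin k) :=
  FreeGroup.lift (fun p => Fin.cases (motive := fun _ => FreeGroup (Fin k)) 1 FreeGroup.of p)

@[simp] lemma piH_zero : piH k (FreeGroup.of 0) = 1 := by simp [piH]

@[simp] lemma piH_iota (w : FreeGroup (Fin k)) : piH k (iota k w) = w := by
  have h : (piH k).comp (iota k) = MonoidHom.id _ :=
    FreeGroup.ext_hom _ _ (fun a => by simp [piH])
  exact DFunLike.congr_fun h w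

lemma iota_injective : Function.Injective (iota k) := fun a b h => by
  rw [← piH_iota k a, h, piH_iota]

/-- Left multiplication as a homomorphism to permutations. -/
def ml : FreeGroup (Fin k) →* Equiv.Perm (FreeGroup (Fin k)) where
  toFun w := Equiv.mulLeft w
  map_one' := by ext x; simp
  map_mul' a b := by ext x; simp [mul_assoc]

/-- The representation of `F_{k+1}` on `F_k` with `x_0` acting by inversion and
`x_{i+1}` by left multiplication by `x_i`. -/
def muH : FreeGroup (Fin (k + 1)) →* Equiv.Perm (FreeGroup (Fin k)) :=
  FreeGroup.lift (fun p => Fin.cases (motive := fun _ => Equiv.Perm (FreeGroup (Fin k)))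
    (Equiv.inv _) (fun i => Equiv.mulLeft (FreeGroup.of i)) p)

@[simp] lemma muH_zero : muH k (FreeGroup.of 0) = Equiv.inv _ := by simp [muH]

@[simp] lemma muH_iota (w : FreeGroup (Fin k)) : muH k (iota k w) = Equiv.mulLeft w := by
  have h : (muH k).comp (iota k) = ml k :=
    FreeGroup.ext_hom _ _ (fun a => by simp [muH, ml])
  exact DFunLike.congr_fun h w

/-- The endomorphism of `F_{k+1}` determined by `(l, r, φ)`:
`x_0 ↦ l⁻¹ x_0 r` and `x_{i+1} ↦ φ(x_i)`. -/
def Efun (l r : FreeGroup (Fin k)) (φ : MulAut (FreeGroup (Fin k))) :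
    FreeGroup (Fin (k + 1)) →* FreeGroup (Fin (k + 1)) :=
  FreeGroup.lift (fun p => Fin.cases (motive := fun _ => FreeGroup (Fin (k + 1)))
    ((iota k l)⁻¹ * FreeGroup.of 0 * iota k r) (fun i => iota k (φ (FreeGroup.of i))) p)

@[simp] lemma Efun_zero (l r : FreeGroup (Fin k)) (φ : MulAut (FreeGroup (Fin k))) :
    Efun k l r φ (FreeGroup.of 0) = (iota k l)⁻¹ * FreeGroup.of 0 * iota k r := by
  simp [Efun]

@[simp] lemma Efun_succ (l r : FreeGroup (Fin k)) (φ : MulAut (FreeGroup (Fin k))) (i : Fin k) :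
    Efun k l r φ (FreeGroup.of i.succ) = iota k (φ (FreeGroup.of i)) := by
  simp [Efun]

@[simp] lemma Efun_iota (l r : FreeGroup (Fin k)) (φ : MulAut (FreeGroup (Fin k)))
    (w : FreeGroup (Fin k)) : Efun k l r φ (iota k w) = iota k (φ w) := by
  have h : (Efun k l r φ).comp (iota k) = (iota k).comp φ.toMonoidHom :=
    FreeGroup.ext_hom _ _ (fun a => by
      rw [MonoidHom.comp_apply, MonoidHom.comp_apply, iota_of, Efun_succ]; rfl)
  exact DFunLike.congr_fun h w

lemma Efun_comp (l1 r1 l2 r2 : FreeGroup (Fin k)) (φ1 φ2 : MulAut (FreeGroup (Fin k))) :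
    (Efun k l1 r1 φ1).comp (Efun k l2 r2 φ2)
      = Efun k (l1 * φ1 l2) (r1 * φ1 r2) (φ1 * φ2) := by
  refine FreeGroup.ext_hom _ _ (fun p => ?_)
  induction p using Fin.cases with
  | zero =>
    rw [MonoidHom.comp_apply, Efun_zero, Efun_zero, map_mul, map_mul, map_inv,
      Efun_iota, Efun_zero, Efun_iota]
    simp [map_mul, mul_inv_rev, mul_assoc]
  | succ i =>
    rw [MonoidHom.comp_apply, Efun_succ, Efun_succ, Efun_iota]
    rfl

lemma Efun_one : Efun k 1 1 1 = MonoidHom.id _ := by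
  refine FreeGroup.ext_hom _ _ (fun p => ?_)
  induction p using Fin.cases with
  | zero => simp
  | succ i => simp

end Main

end PRA

namespace PRA

section Main2

variable (k : ℕ)

lemma fin_succ_exists (i : Fin (k + 1)) (h : i ≠ 0) : ∃ j : Fin k, i = Fin.succ j := by
  induction i using Fin.cases with
  | zero => exact absurd rfl h
  | succ b => exact ⟨b, rfl⟩

/-- The endomorphism of `F_{k+1}` associated to an element of the semidirect product. -/
def Ebig (g : (FreeGroup (Fin k) × FreeGroup (Fin k)) ⋊[diagAct k] SAutk k) :
    FreeGroup (Fin (k + 1)) →* FreeGroup (Fin (k + 1)) :=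
  Efun k g.left.1 g.left.2 g.right

lemma Ebig_mul (g h : (FreeGroup (Fin k) × FreeGroup (Fin k)) ⋊[diagAct k] SAutk k) :
    Ebig k (g * h) = (Ebig k g).comp (Ebig k h) := by
  rw [Ebig, Ebig, Ebig, Efun_comp]
  rfl

lemma Ebig_one : Ebig k 1 = MonoidHom.id _ := Efun_one k

/-- The homomorphism `(F_k × F_k) ⋊ SAut(F_k) →* Aut(F_{k+1})`. -/
def Phi : ((FreeGroup (Fin k) × FreeGroup (Fin k)) ⋊[diagAct k] SAutk k)
    →* MulAut (FreeGroup (Fin (k + 1))) where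
  toFun g := MonoidHom.toMulEquiv (Ebig k g) (Ebig k g⁻¹)
    (by rw [← Ebig_mul, inv_mul_cancel, Ebig_one])
    (by rw [← Ebig_mul, mul_inv_cancel, Ebig_one])
  map_one' := by
    refine MulEquiv.ext (fun x => ?_)
    show Ebig k 1 x = x
    rw [Ebig_one]; rfl
  map_mul' a b := by
    refine MulEquiv.ext (fun x => ?_)
    show Ebig k (a * b) x = Ebig k a (Ebig k b x)
    rw [Ebig_mul]; rfl

lemma Phi_apply (g : (FreeGroup (Fin k) × FreeGroup (Fin k)) ⋊[diagAct k] SAutk k)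
    (x : FreeGroup (Fin (k + 1))) : Phi k g x = Ebig k g x := rfl

lemma Phi_injective : Function.Injective (Phi k) := by
  rw [injective_iff_map_eq_one]
  intro g hg
  have hx : ∀ x, Ebig k g x = x := fun x => MulEquiv.ext_iff.mp hg x
  have hright : g.right = 1 := by
    apply Subtype.ext
    apply mulAut_ext
    intro i
    apply iota_injective k
    have h2 := hx (FreeGroup.of i.succ)
    rw [Ebig, Efun_succ] at h2
    rw [h2]
    show FreeGroup.of i.succ = iota k (FreeGroup.of i)
    rw [iota_of]
  have h0 := hx (FreeGroup.of 0)
  rw [Ebig, Efun_zero] at h0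
  have hlr : g.left.1 = g.left.2 := by
    have h1 := congrArg (piH k) h0
    rw [map_mul, map_mul, map_inv, piH_iota, piH_iota, piH_zero, mul_one] at h1
    exact inv_mul_eq_one.mp h1
  have hcomm : FreeGroup.of (0 : Fin (k + 1)) * iota k g.left.1
      = iota k g.left.1 * FreeGroup.of 0 := by
    rw [← hlr] at h0
    have h2 : iota k g.left.1 * ((iota k g.left.1)⁻¹ * FreeGroup.of 0 * iota k g.left.1)
        = iota k g.left.1 * FreeGroup.of 0 := by rw [h0]
    rw [← mul_assoc, ← mul_assoc, mul_inv_cancel, one_mul] at h2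
    exact h2
  have hinv : (g.left.1)⁻¹ = g.left.1 := by
    have h3 := congrArg (muH k) hcomm
    rw [map_mul, map_mul, muH_zero, muH_iota] at h3
    have h4 := congrArg (fun e : Equiv.Perm (FreeGroup (Fin k)) => e 1) h3
    simpa using h4
  have hl2 : g.left.1 * g.left.1 = 1 := by
    have := mul_inv_cancel g.left.1
    rwa [hinv] at this
  have hl1 : g.left.1 = 1 := freeGroup_sq_eq_one hl2
  have hleft : g.left = 1 := Prod.ext hl1 (by rw [← hlr, hl1]; rfl)
  exact SemidirectProduct.ext hleft hright

lemma Phi_inl_left (m : Fin k) :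
    Phi k (SemidirectProduct.inl (FreeGroup.of m, 1)) = (nL 0 m.succ)⁻¹ := by
  have hne : ¬(0 : Fin (k + 1)) = m.succ := (Fin.succ_ne_zero m).symm
  apply mulAut_ext
  intro p
  have hL : Phi k (SemidirectProduct.inl ((FreeGroup.of m : FreeGroup (Fin k)), 1))
      (FreeGroup.of p) = Efun k (FreeGroup.of m) 1 1 (FreeGroup.of p) := rfl
  rw [hL, nL, dif_neg hne, MulAut.inv_def]
  induction p using Fin.cases with
  | zero =>
    rw [Efun_zero]
    show _ = lB 0 m.succ (FreeGroup.of 0)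
    simp [lB]
  | succ i =>
    rw [Efun_succ]
    show _ = lB 0 m.succ (FreeGroup.of i.succ)
    simp [lB, Fin.succ_ne_zero]

lemma Phi_inl_right (m : Fin k) :
    Phi k (SemidirectProduct.inl (1, FreeGroup.of m)) = nR 0 m.succ := by
  have hne : ¬(0 : Fin (k + 1)) = m.succ := (Fin.succ_ne_zero m).symm
  apply mulAut_ext
  intro p
  have hL : Phi k (SemidirectProduct.inl ((1 : FreeGroup (Fin k)), FreeGroup.of m))
      (FreeGroup.of p) = Efun k 1 (FreeGroup.of m) 1 (FreeGroup.of p) := rfl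
  rw [hL, nR, dif_neg hne]
  induction p using Fin.cases with
  | zero =>
    rw [Efun_zero]
    show _ = rA 0 m.succ (FreeGroup.of 0)
    simp [rA]
  | succ i =>
    rw [Efun_succ]
    show _ = rA 0 m.succ (FreeGroup.of i.succ)
    simp [rA, Fin.succ_ne_zero]

lemma Phi_inr_nL (a b : Fin k) (hab : ¬ a = b) (hm : nL a b ∈ SAutk k) :
    Phi k (SemidirectProduct.inr (⟨nL a b, hm⟩ : SAutk k)) = nL a.succ b.succ := by
  have h2 : ¬(a.succ = b.succ) := fun e => hab (Fin.succ_injective k e)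
  apply mulAut_ext
  intro p
  have hL : Phi k (SemidirectProduct.inr (⟨nL a b, hm⟩ : SAutk k)) (FreeGroup.of p)
      = Efun k 1 1 (nL a b) (FreeGroup.of p) := rfl
  rw [hL, nL, nL, dif_neg hab, dif_neg h2]
  induction p using Fin.cases with
  | zero =>
    rw [Efun_zero]
    show _ = lA a.succ b.succ (FreeGroup.of 0)
    simp [lA, (Fin.succ_ne_zero a).symm]
  | succ i =>
    rw [Efun_succ]
    show iota k (lA a b (FreeGroup.of i)) = lA a.succ b.succ (FreeGroup.of i.succ)
    by_cases hia : i = a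
    · subst hia
      simp [lA]
    · simp [lA, hia, fun e => hia (Fin.succ_injective k e)]

lemma Phi_inr_nR (a b : Fin k) (hab : ¬ a = b) (hm : nR a b ∈ SAutk k) :
    Phi k (SemidirectProduct.inr (⟨nR a b, hm⟩ : SAutk k)) = nR a.succ b.succ := by
  have h2 : ¬(a.succ = b.succ) := fun e => hab (Fin.succ_injective k e)
  apply mulAut_ext
  intro p
  have hL : Phi k (SemidirectProduct.inr (⟨nR a b, hm⟩ : SAutk k)) (FreeGroup.of p)
      = Efun k 1 1 (nR a b) (FreeGroup.of p) := rfl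
  rw [hL, nR, nR, dif_neg hab, dif_neg h2]
  induction p using Fin.cases with
  | zero =>
    rw [Efun_zero]
    show _ = rA a.succ b.succ (FreeGroup.of 0)
    simp [rA, (Fin.succ_ne_zero a).symm]
  | succ i =>
    rw [Efun_succ]
    show iota k (rA a b (FreeGroup.of i)) = rA a.succ b.succ (FreeGroup.of i.succ)
    by_cases hia : i = a
    · subst hia
      simp [rA]
    · simp [rA, hia, fun e => hia (Fin.succ_injective k e)]

lemma Phi_range : (Phi k).range = Ak k := by
  have key1 : ∀ l : FreeGroup (Fin k),
      Phi k (SemidirectProduct.inl (l, 1)) ∈ Ak k := by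
    intro l
    induction l using FreeGroup.induction_on with
    | C1 =>
      have h1 : ((1 : FreeGroup (Fin k)), (1 : FreeGroup (Fin k)))
          = (1 : FreeGroup (Fin k) × FreeGroup (Fin k)) := rfl
      rw [h1, map_one, map_one]
      exact one_mem _
    | of x =>
      show Phi k (SemidirectProduct.inl (FreeGroup.of x, 1)) ∈ Ak k
      rw [Phi_inl_left k x]
      exact inv_mem (nL_mem _ _ (Fin.succ_ne_zero x))
    | inv_of x ih =>
      show Phi k (SemidirectProduct.inl ((FreeGroup.of x)⁻¹, 1)) ∈ Ak k
      have h1 : ((FreeGroup.of x)⁻¹, (1 : FreeGroup (Fin k)))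
          = ((FreeGroup.of x : FreeGroup (Fin k)), (1 : FreeGroup (Fin k)))⁻¹ := by
        rw [Prod.inv_mk, inv_one]
      rw [h1, map_inv, map_inv]
      exact inv_mem ih
    | mul x y hx hy =>
      have h1 : ((x * y : FreeGroup (Fin k)), (1 : FreeGroup (Fin k)))
          = (x, (1 : FreeGroup (Fin k))) * (y, (1 : FreeGroup (Fin k))) := by
        rw [Prod.mk_mul_mk, mul_one]
      rw [h1, map_mul, map_mul]
      exact mul_mem hx hy
  have key2 : ∀ r : FreeGroup (Fin k),
      Phi k (SemidirectProduct.inl (1, r)) ∈ Ak k := by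
    intro r
    induction r using FreeGroup.induction_on with
    | C1 =>
      have h1 : ((1 : FreeGroup (Fin k)), (1 : FreeGroup (Fin k)))
          = (1 : FreeGroup (Fin k) × FreeGroup (Fin k)) := rfl
      rw [h1, map_one, map_one]
      exact one_mem _
    | of x =>
      show Phi k (SemidirectProduct.inl (1, FreeGroup.of x)) ∈ Ak k
      rw [Phi_inl_right k x]
      exact nR_mem _ _ (Fin.succ_ne_zero x)
    | inv_of x ih =>
      show Phi k (SemidirectProduct.inl (1, (FreeGroup.of x)⁻¹)) ∈ Ak k
      have h1 : ((1 : FreeGroup (Fin k)), (FreeGroup.of x)⁻¹)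
          = ((1 : FreeGroup (Fin k)), (FreeGroup.of x : FreeGroup (Fin k)))⁻¹ := by
        rw [Prod.inv_mk, inv_one]
      rw [h1, map_inv, map_inv]
      exact inv_mem ih
    | mul x y hx hy =>
      have h1 : ((1 : FreeGroup (Fin k)), (x * y : FreeGroup (Fin k)))
          = ((1 : FreeGroup (Fin k)), x) * ((1 : FreeGroup (Fin k)), y) := by
        rw [Prod.mk_mul_mk, mul_one]
      rw [h1, map_mul, map_mul]
      exact mul_mem hx hy
  have key3 : ∀ s : SAutk k, Phi k (SemidirectProduct.inr s) ∈ Ak k := by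
    rintro ⟨ψ, hψ⟩
    refine Subgroup.closure_induction
      (p := fun x hx => Phi k (SemidirectProduct.inr (⟨x, hx⟩ : SAutk k)) ∈ Ak k)
      ?_ ?_ ?_ ?_ hψ
    · intro x hx
      obtain ⟨a, b, hab, hc⟩ := hx
      have hmL : nL a b ∈ SAutk k := Subgroup.subset_closure ⟨a, b, hab, Or.inl rfl⟩
      have hmR : nR a b ∈ SAutk k :=
        Subgroup.subset_closure ⟨a, b, hab, Or.inr (Or.inr (Or.inl rfl))⟩
      rcases hc with rfl | rfl | rfl | rfl
      · erw [Phi_inr_nL k a b hab]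
        exact nL_mem _ _ (Fin.succ_ne_zero b)
      · have he : (⟨(nL a b)⁻¹, Subgroup.subset_closure ⟨a, b, hab, Or.inr (Or.inl rfl)⟩⟩
            : SAutk k) = (⟨nL a b, hmL⟩ : SAutk k)⁻¹ := rfl
        rw [he, map_inv, map_inv, Phi_inr_nL k a b hab]
        exact inv_mem (nL_mem _ _ (Fin.succ_ne_zero b))
      · erw [Phi_inr_nR k a b hab]
        exact nR_mem _ _ (Fin.succ_ne_zero b)
      · have he : (⟨(nR a b)⁻¹,
            Subgroup.subset_closure ⟨a, b, hab, Or.inr (Or.inr (Or.inr rfl))⟩⟩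
            : SAutk k) = (⟨nR a b, hmR⟩ : SAutk k)⁻¹ := rfl
        rw [he, map_inv, map_inv, Phi_inr_nR k a b hab]
        exact inv_mem (nR_mem _ _ (Fin.succ_ne_zero b))
    · show Phi k (SemidirectProduct.inr (1 : SAutk k)) ∈ Ak k
      rw [map_one, map_one]
      exact one_mem _
    · intro x y hx hy px py
      have he : (⟨x * y, mul_mem hx hy⟩ : SAutk k) = ⟨x, hx⟩ * ⟨y, hy⟩ := rfl
      rw [he, map_mul, map_mul]
      exact mul_mem px py
    · intro x hx px
      have he : (⟨x⁻¹, inv_mem hx⟩ : SAutk k) = (⟨x, hx⟩ : SAutk k)⁻¹ := rfl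
      rw [he, map_inv, map_inv]
      exact inv_mem px
  apply le_antisymm
  · rintro x ⟨g, rfl⟩
    rw [← SemidirectProduct.inl_left_mul_inr_right g]
    have hsplit : (SemidirectProduct.inl g.left
        : (FreeGroup (Fin k) × FreeGroup (Fin k)) ⋊[diagAct k] SAutk k)
        = SemidirectProduct.inl (g.left.1, 1) * SemidirectProduct.inl (1, g.left.2) := by
      rw [← map_mul]
      exact congrArg _ (by rw [Prod.mk_mul_mk, mul_one, one_mul])
    rw [map_mul, hsplit, map_mul]
    exact mul_mem (mul_mem (key1 _) (key2 _)) (key3 _)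
  · rw [Ak, Subgroup.closure_le]
    rintro x ⟨i, j, hij, hj0, hc⟩
    obtain ⟨b, rfl⟩ := fin_succ_exists k j hj0
    have hL : nL i b.succ ∈ (Phi k).range := by
      by_cases hi : i = 0
      · subst hi
        rw [← inv_inv (nL 0 b.succ), ← Phi_inl_left k b]
        exact inv_mem (MonoidHom.mem_range.mpr ⟨_, rfl⟩)
      · obtain ⟨a, rfl⟩ := fin_succ_exists k i hi
        have hab : ¬ a = b := fun e => hij (by rw [e])
        rw [← Phi_inr_nL k a b hab (Subgroup.subset_closure ⟨a, b, hab, Or.inl rfl⟩)]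
        exact MonoidHom.mem_range.mpr ⟨_, rfl⟩
    have hR : nR i b.succ ∈ (Phi k).range := by
      by_cases hi : i = 0
      · subst hi
        rw [← Phi_inl_right k b]
        exact MonoidHom.mem_range.mpr ⟨_, rfl⟩
      · obtain ⟨a, rfl⟩ := fin_succ_exists k i hi
        have hab : ¬ a = b := fun e => hij (by rw [e])
        rw [← Phi_inr_nR k a b hab
          (Subgroup.subset_closure ⟨a, b, hab, Or.inr (Or.inr (Or.inl rfl))⟩)]
        exact MonoidHom.mem_range.mpr ⟨_, rfl⟩
    rcases hc with rfl | rfl | rfl | rfl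
    exacts [hL, inv_mem hL, hR, inv_mem hR]

end Main2

end PRA

open PRA in
/-- The group `A_k` is isomorphic to the semidirect product
`(F_k × F_k) ⋊ SAut(F_k)`, where `SAut(F_k)` acts coordinatewise on `F_k × F_k` via the
canonical action of automorphisms on the free group. -/
theorem statement11 (k : ℕ) (hk : 1 ≤ k) :
    Nonempty (((FreeGroup (Fin k) × FreeGroup (Fin k)) ⋊[diagAct k] SAutk k) ≃* Ak k) := by
  exact ⟨(MonoidHom.ofInjective (Phi_injective k)).trans (MulEquiv.subgroupCongr (Phi_range k))⟩
end
end

section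
/- Every ψ ∈ A_k maps the subgroup F_k = ⟨x_1,…,x_k⟩ of F_{k+1} onto itself, giving a restriction homomorphism p: A_k → Aut(F_k). Moreover, for every ψ ∈ ker(p) (i.e., ψ ∈ A_k fixing each x_i for 1 ≤ i ≤ k) there exist unique elements l, r ∈ F_k with ψ(x_0) = l·x_0·r, and the map j(ψ) = (l^{-1}, r) is a group isomorphism from ker(p) onto F_k × F_k. -/
noncomputable section

namespace PRA

/-- The subgroup `F_k = ⟨x_1,…,x_k⟩` of `F_{k+1} = ⟨x_0,x_1,…,x_k⟩`. -/
def Fsub (k : ℕ) : Subgroup (FreeGroup (Fin (k + 1))) :=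
  Subgroup.closure (Set.range fun i : Fin k => FreeGroup.of i.succ)

/-- The canonical embedding `F_k ↪ F_{k+1}`, `x_i ↦ x_i` (`1 ≤ i ≤ k`). -/
def embF (k : ℕ) : FreeGroup (Fin k) →* FreeGroup (Fin (k + 1)) :=
  FreeGroup.lift fun i : Fin k => FreeGroup.of i.succ

/-- The subgroup of `A_k` of automorphisms fixing each of `x_1, …, x_k`
(the kernel of the restriction homomorphism `p : A_k → Aut(F_k)`). -/
def Kker (k : ℕ) : Subgroup (Ak k) where
  carrier := {ψ | ∀ i : Fin k,
    (ψ : MulAut (FreeGroup (Fin (k + 1)))) (FreeGroup.of i.succ) = FreeGroup.of i.succ}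
  one_mem' := fun _ => rfl
  mul_mem' := by
    intro a b ha hb i
    have h : ((a * b : Ak k) : MulAut (FreeGroup (Fin (k + 1)))) (FreeGroup.of i.succ)
        = (a : MulAut (FreeGroup (Fin (k + 1))))
            ((b : MulAut (FreeGroup (Fin (k + 1)))) (FreeGroup.of i.succ)) := rfl
    rw [h, hb i, ha i]
  inv_mem' := by
    intro a ha i
    have h : ((a⁻¹ : Ak k) : MulAut (FreeGroup (Fin (k + 1))))
        = ((a : Ak k) : MulAut (FreeGroup (Fin (k + 1))))⁻¹ := rfl
    rw [h]
    conv_lhs => rw [← ha i]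
    exact (a : MulAut (FreeGroup (Fin (k + 1)))).symm_apply_apply _

end PRA

namespace PRA

variable {k : ℕ}

open FreeGroup

lemma mem_Fsub_of_succ (i : Fin k) : FreeGroup.of i.succ ∈ Fsub k :=
  Subgroup.subset_closure ⟨i, rfl⟩

lemma mem_Fsub_of_ne_zero {j : Fin (k + 1)} (hj : j ≠ 0) : FreeGroup.of j ∈ Fsub k := by
  obtain ⟨j', rfl⟩ := Fin.exists_succ_eq.mpr hj
  exact mem_Fsub_of_succ j'

/-- The key property for the induction over `A_k`. -/
def Q (f : FreeGroup (Fin (k + 1)) →* FreeGroup (Fin (k + 1))) : Prop :=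
  Subgroup.map f (Fsub k) ≤ Fsub k ∧
    ∃ a ∈ Fsub k, ∃ b ∈ Fsub k, f (FreeGroup.of 0) = a * FreeGroup.of 0 * b

lemma Q_lift {g : Fin (k + 1) → FreeGroup (Fin (k + 1))}
    (hsucc : ∀ m : Fin k, g m.succ ∈ Fsub k)
    (h0 : ∃ a ∈ Fsub k, ∃ b ∈ Fsub k, g 0 = a * FreeGroup.of 0 * b) :
    Q (FreeGroup.lift g) := by
  constructor
  · rw [Fsub, MonoidHom.map_closure]
    refine (Subgroup.closure_le _).2 ?_
    rintro _ ⟨_, ⟨m, rfl⟩, rfl⟩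
    simpa [Fsub] using hsucc m
  · simpa using h0

lemma Q_lA (i j : Fin (k + 1)) (hj : j ≠ 0) : Q (lA i j) := by
  refine Q_lift (fun m => ?_) ?_
  · split_ifs
    · exact mul_mem (mem_Fsub_of_ne_zero hj) (mem_Fsub_of_succ m)
    · exact mem_Fsub_of_succ m
  · by_cases h0i : (0 : Fin (k + 1)) = i
    · exact ⟨FreeGroup.of j, mem_Fsub_of_ne_zero hj, 1, one_mem _, by rw [if_pos h0i, mul_one]⟩
    · exact ⟨1, one_mem _, 1, one_mem _, by rw [if_neg h0i, one_mul, mul_one]⟩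

lemma Q_lB (i j : Fin (k + 1)) (hj : j ≠ 0) : Q (lB i j) := by
  refine Q_lift (fun m => ?_) ?_
  · split_ifs
    · exact mul_mem (inv_mem (mem_Fsub_of_ne_zero hj)) (mem_Fsub_of_succ m)
    · exact mem_Fsub_of_succ m
  · by_cases h0i : (0 : Fin (k + 1)) = i
    · exact ⟨(FreeGroup.of j)⁻¹, inv_mem (mem_Fsub_of_ne_zero hj), 1, one_mem _,
        by rw [if_pos h0i, mul_one]⟩
    · exact ⟨1, one_mem _, 1, one_mem _, by rw [if_neg h0i, one_mul, mul_one]⟩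

lemma Q_rA (i j : Fin (k + 1)) (hj : j ≠ 0) : Q (rA i j) := by
  refine Q_lift (fun m => ?_) ?_
  · split_ifs
    · exact mul_mem (mem_Fsub_of_succ m) (mem_Fsub_of_ne_zero hj)
    · exact mem_Fsub_of_succ m
  · by_cases h0i : (0 : Fin (k + 1)) = i
    · exact ⟨1, one_mem _, FreeGroup.of j, mem_Fsub_of_ne_zero hj,
        by rw [if_pos h0i, one_mul]⟩
    · exact ⟨1, one_mem _, 1, one_mem _, by rw [if_neg h0i, one_mul, mul_one]⟩

lemma Q_rB (i j : Fin (k + 1)) (hj : j ≠ 0) : Q (rB i j) := by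
  refine Q_lift (fun m => ?_) ?_
  · split_ifs
    · exact mul_mem (mem_Fsub_of_succ m) (inv_mem (mem_Fsub_of_ne_zero hj))
    · exact mem_Fsub_of_succ m
  · by_cases h0i : (0 : Fin (k + 1)) = i
    · exact ⟨1, one_mem _, (FreeGroup.of j)⁻¹, inv_mem (mem_Fsub_of_ne_zero hj),
        by rw [if_pos h0i, one_mul]⟩
    · exact ⟨1, one_mem _, 1, one_mem _, by rw [if_neg h0i, one_mul, mul_one]⟩

lemma Q_comp {f g : FreeGroup (Fin (k + 1)) →* FreeGroup (Fin (k + 1))}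
    (hf : Q f) (hg : Q g) : Q (f.comp g) := by
  constructor
  · rw [← Subgroup.map_map]
    exact le_trans (Subgroup.map_mono hg.1) hf.1
  · obtain ⟨a, ha, b, hb, hab⟩ := hg.2
    obtain ⟨a', ha', b', hb', hab'⟩ := hf.2
    have hfa : f a ∈ Fsub k := hf.1 (Subgroup.mem_map.2 ⟨a, ha, rfl⟩)
    have hfb : f b ∈ Fsub k := hf.1 (Subgroup.mem_map.2 ⟨b, hb, rfl⟩)
    refine ⟨f a * a', mul_mem hfa ha', b' * f b, mul_mem hb' hfb, ?_⟩
    rw [MonoidHom.comp_apply, hab]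
    simp only [_root_.map_mul]
    rw [hab']
    simp [mul_assoc]

lemma nL_hom {i j : Fin (k + 1)} (h : i ≠ j) : (nL i j).toMonoidHom = lA i j := by
  rw [nL, dif_neg h]; rfl

lemma nL_inv_hom {i j : Fin (k + 1)} (h : i ≠ j) : ((nL i j)⁻¹).toMonoidHom = lB i j := by
  rw [nL, dif_neg h]; rfl

lemma nR_hom {i j : Fin (k + 1)} (h : i ≠ j) : (nR i j).toMonoidHom = rA i j := by
  rw [nR, dif_neg h]; rfl

lemma nR_inv_hom {i j : Fin (k + 1)} (h : i ≠ j) : ((nR i j)⁻¹).toMonoidHom = rB i j := by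
  rw [nR, dif_neg h]; rfl

lemma mulAut_mul_hom (x y : MulAut (FreeGroup (Fin (k + 1)))) :
    (x * y).toMonoidHom = x.toMonoidHom.comp y.toMonoidHom := by
  ext z; rfl

lemma Q_one : Q ((1 : MulAut (FreeGroup (Fin (k + 1)))).toMonoidHom) := by
  constructor
  · rintro x ⟨y, hy, rfl⟩; exact hy
  · exact ⟨1, one_mem _, 1, one_mem _, by simp⟩

lemma Ak_prop {ψ : MulAut (FreeGroup (Fin (k + 1)))} (hψ : ψ ∈ Ak k) :
    Q ψ.toMonoidHom ∧ Q (ψ⁻¹).toMonoidHom := by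
  induction hψ using Subgroup.closure_induction with
  | mem x hx =>
    obtain ⟨i, j, hij, hj, hcase⟩ := hx
    rcases hcase with rfl | rfl | rfl | rfl
    · exact ⟨(nL_hom hij) ▸ Q_lA i j hj, (nL_inv_hom hij) ▸ Q_lB i j hj⟩
    · refine ⟨(nL_inv_hom hij) ▸ Q_lB i j hj, ?_⟩
      rw [inv_inv, nL_hom hij]; exact Q_lA i j hj
    · exact ⟨(nR_hom hij) ▸ Q_rA i j hj, (nR_inv_hom hij) ▸ Q_rB i j hj⟩
    · refine ⟨(nR_inv_hom hij) ▸ Q_rB i j hj, ?_⟩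
      rw [inv_inv, nR_hom hij]; exact Q_rA i j hj
  | one => exact ⟨Q_one, by rw [inv_one]; exact Q_one⟩
  | mul x y hx hy ihx ihy =>
    constructor
    · rw [mulAut_mul_hom]; exact Q_comp ihx.1 ihy.1
    · rw [mul_inv_rev, mulAut_mul_hom]; exact Q_comp ihy.2 ihx.2
  | inv x hx ih => exact ⟨ih.2, by rw [inv_inv]; exact ih.1⟩

lemma map_Fsub_eq {ψ : MulAut (FreeGroup (Fin (k + 1)))} (hψ : ψ ∈ Ak k) :
    Subgroup.map ψ.toMonoidHom (Fsub k) = Fsub k := by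
  refine le_antisymm (Ak_prop hψ).1.1 ?_
  have hcomp : ψ.toMonoidHom.comp (ψ⁻¹).toMonoidHom = MonoidHom.id _ :=
    MonoidHom.ext fun x => ψ.apply_symm_apply x
  calc Fsub k = Subgroup.map ψ.toMonoidHom (Subgroup.map (ψ⁻¹).toMonoidHom (Fsub k)) := by
        rw [Subgroup.map_map, hcomp, Subgroup.map_id]
    _ ≤ Subgroup.map ψ.toMonoidHom (Fsub k) := Subgroup.map_mono (Ak_prop hψ).2.1

lemma embF_range : (embF k).range = Fsub k := by
  rw [embF, FreeGroup.range_lift_eq_closure]; rfl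

/-- The retraction `F_{k+1} → F_k` killing `x_0`. -/
def piF (k : ℕ) : FreeGroup (Fin (k + 1)) →* FreeGroup (Fin k) :=
  FreeGroup.lift (Fin.cases 1 FreeGroup.of)

lemma piF_embF (w : FreeGroup (Fin k)) : piF k (embF k w) = w := by
  have h : (piF k).comp (embF k) = MonoidHom.id _ :=
    FreeGroup.ext_hom _ _ fun i => by simp [piF, embF]
  exact DFunLike.congr_fun h w

/-- The "left regular on the `0`-fiber" permutation representation of `F_k`
on `F_k × ℤ`. -/
def rho : FreeGroup (Fin k) →* Equiv.Perm (FreeGroup (Fin k) × ℤ) :=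
  MonoidHom.mk' (fun w =>
    { toFun := fun p => (if p.2 = 0 then w * p.1 else p.1, p.2)
      invFun := fun p => (if p.2 = 0 then w⁻¹ * p.1 else p.1, p.2)
      left_inv := by rintro ⟨p1, p2⟩; by_cases h : p2 = 0 <;> simp [h]
      right_inv := by rintro ⟨p1, p2⟩; by_cases h : p2 = 0 <;> simp [h] })
    (by
      intro w1 w2
      ext p : 1
      by_cases h : p.2 = 0 <;> simp [Equiv.Perm.mul_apply, h, mul_assoc])

/-- The shift on the second factor. -/
def shiftP : Equiv.Perm (FreeGroup (Fin k) × ℤ) :=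
  Equiv.prodCongr (Equiv.refl _) (Equiv.addRight (1 : ℤ))

/-- The permutation representation of `F_{k+1}` on `F_k × ℤ` in which `x_0` acts as the
shift and `x_{i+1}` acts via `rho`. -/
def xiF : FreeGroup (Fin (k + 1)) →* Equiv.Perm (FreeGroup (Fin k) × ℤ) :=
  FreeGroup.lift (Fin.cases shiftP fun i => rho (FreeGroup.of i))

lemma xiF_embF (w : FreeGroup (Fin k)) : xiF (embF k w) = rho w := by
  have h : (xiF (k := k)).comp (embF k) = rho :=
    FreeGroup.ext_hom _ _ fun i => by simp [xiF, embF]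
  exact DFunLike.congr_fun h w

lemma key {a b : FreeGroup (Fin k)}
    (h : embF k a * FreeGroup.of 0 * embF k b = FreeGroup.of 0) : a = 1 ∧ b = 1 := by
  have hb : b = a⁻¹ := by
    have h2 : piF k (FreeGroup.of (0 : Fin (k + 1))) = 1 := by simp [piF]
    have h1 : a * b = 1 := by
      have h1 := congrArg (piF k) h
      rw [_root_.map_mul, _root_.map_mul, piF_embF, piF_embF, h2, mul_one] at h1
      exact h1
    exact (mul_eq_one_iff_inv_eq.mp h1).symm
  subst hb
  have hcomm : embF k a * FreeGroup.of 0 = FreeGroup.of 0 * embF k a := by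
    rw [_root_.map_inv] at h
    exact mul_inv_eq_iff_eq_mul.mp h
  have hxi := congrArg xiF hcomm
  rw [_root_.map_mul, _root_.map_mul, xiF_embF] at hxi
  have h0 : xiF (FreeGroup.of (0 : Fin (k + 1))) = shiftP := by simp [xiF]
  rw [h0] at hxi
  have hpt := Equiv.ext_iff.1 hxi ((1 : FreeGroup (Fin k)), (0 : ℤ))
  simp only [Equiv.Perm.mul_apply, rho, shiftP, MonoidHom.mk'_apply, Equiv.coe_fn_mk,
    Equiv.prodCongr_apply, Equiv.coe_refl, Prod.map, Equiv.coe_addRight, id_eq] at hpt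
  norm_num at hpt
  have ha : a = 1 := by
    have h5 := hpt
    simpa using h5.symm
  exact ⟨ha, by rw [ha]; exact inv_one⟩

/-- The endomorphism `x_0 ↦ l⁻¹ x_0 r`, `x_{i+1} ↦ x_{i+1}`. -/
def fwd (l r : FreeGroup (Fin k)) : FreeGroup (Fin (k + 1)) →* FreeGroup (Fin (k + 1)) :=
  FreeGroup.lift (Fin.cases ((embF k l)⁻¹ * FreeGroup.of 0 * embF k r)
    fun i => FreeGroup.of i.succ)

lemma fwd_of0 (l r : FreeGroup (Fin k)) :
    fwd l r (FreeGroup.of 0) = (embF k l)⁻¹ * FreeGroup.of 0 * embF k r := by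
  simp [fwd]

lemma fwd_succ (l r : FreeGroup (Fin k)) (i : Fin k) :
    fwd l r (FreeGroup.of i.succ) = FreeGroup.of i.succ := by
  simp [fwd]

lemma fwd_embF (l r w : FreeGroup (Fin k)) : fwd l r (embF k w) = embF k w := by
  have h : (fwd l r).comp (embF k) = embF k :=
    FreeGroup.ext_hom _ _ fun i => by simp [fwd, embF]
  exact DFunLike.congr_fun h w

lemma fwd_comp (l r l' r' : FreeGroup (Fin k)) :
    (fwd l r).comp (fwd l' r') = fwd (l * l') (r * r') := by
  refine FreeGroup.ext_hom _ _ fun p => ?_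
  induction p using Fin.cases with
  | zero =>
    rw [MonoidHom.comp_apply, fwd_of0, fwd_of0, _root_.map_mul, _root_.map_mul, _root_.map_inv,
      fwd_embF, fwd_embF, fwd_of0]
    simp only [_root_.map_mul, mul_inv_rev]
    group
  | succ i => rw [MonoidHom.comp_apply, fwd_succ, fwd_succ, fwd_succ]

lemma fwd_one : fwd (1 : FreeGroup (Fin k)) 1 = MonoidHom.id _ := by
  refine FreeGroup.ext_hom _ _ fun p => ?_
  induction p using Fin.cases with
  | zero => simp [fwd_of0]
  | succ i => simp [fwd_succ]

/-- `fwd l r` as an automorphism. -/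
def fwdA (l r : FreeGroup (Fin k)) : MulAut (FreeGroup (Fin (k + 1))) :=
  MonoidHom.toMulEquiv (fwd l r) (fwd l⁻¹ r⁻¹)
    (by rw [fwd_comp, inv_mul_cancel, inv_mul_cancel, fwd_one])
    (by rw [fwd_comp, mul_inv_cancel, mul_inv_cancel, fwd_one])

lemma fwdA_hom (l r : FreeGroup (Fin k)) : (fwdA l r).toMonoidHom = fwd l r := rfl

lemma fwdA_mul (l r l' r' : FreeGroup (Fin k)) :
    fwdA (l * l') (r * r') = fwdA l r * fwdA l' r' := by
  apply MulEquiv.toMonoidHom_injective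
  rw [mulAut_mul_hom, fwdA_hom, fwdA_hom, fwdA_hom, fwd_comp]

lemma fwdA_one : fwdA (1 : FreeGroup (Fin k)) 1 = 1 := by
  apply MulEquiv.toMonoidHom_injective
  rw [fwdA_hom, fwd_one]
  ext x; rfl

lemma fwdA_inv (l r : FreeGroup (Fin k)) : (fwdA l r)⁻¹ = fwdA l⁻¹ r⁻¹ := by
  apply MulEquiv.toMonoidHom_injective
  rfl

lemma fwdA_nL (i : Fin k) : fwdA (FreeGroup.of i) 1 = (nL (0 : Fin (k + 1)) i.succ)⁻¹ := by
  have hne : (0 : Fin (k + 1)) ≠ i.succ := (Fin.succ_ne_zero i).symm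
  apply MulEquiv.toMonoidHom_injective
  rw [fwdA_hom, nL_inv_hom hne]
  refine FreeGroup.ext_hom _ _ fun p => ?_
  induction p using Fin.cases with
  | zero => simp [fwd_of0, lB, embF]
  | succ m => simp [fwd_succ, lB, Fin.succ_ne_zero]

lemma fwdA_nR (i : Fin k) : fwdA 1 (FreeGroup.of i) = nR (0 : Fin (k + 1)) i.succ := by
  have hne : (0 : Fin (k + 1)) ≠ i.succ := (Fin.succ_ne_zero i).symm
  apply MulEquiv.toMonoidHom_injective
  rw [fwdA_hom, nR_hom hne]
  refine FreeGroup.ext_hom _ _ fun p => ?_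
  induction p using Fin.cases with
  | zero => simp [fwd_of0, rA, embF]
  | succ m => simp [fwd_succ, rA, Fin.succ_ne_zero]

lemma fwdA_mem (l r : FreeGroup (Fin k)) : fwdA l r ∈ Ak k := by
  have h1 : ∀ w : FreeGroup (Fin k), fwdA w 1 ∈ Ak k := by
    intro w
    have hw : w ∈ Subgroup.closure (Set.range (FreeGroup.of : Fin k → FreeGroup (Fin k))) := by
      rw [FreeGroup.closure_range_of]; trivial
    induction hw using Subgroup.closure_induction with
    | mem x hx =>
      obtain ⟨i, rfl⟩ := hx
      rw [fwdA_nL]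
      exact inv_mem (nL_mem _ _ (Fin.succ_ne_zero i))
    | one => rw [fwdA_one]; exact one_mem _
    | mul x y hx hy ihx ihy =>
      have : fwdA (x * y) 1 = fwdA x 1 * fwdA y 1 := by
        rw [← fwdA_mul, mul_one]
      rw [this]; exact mul_mem ihx ihy
    | inv x hx ih =>
      have : fwdA x⁻¹ 1 = (fwdA x 1)⁻¹ := by rw [fwdA_inv, inv_one]
      rw [this]; exact inv_mem ih
  have h2 : ∀ w : FreeGroup (Fin k), fwdA 1 w ∈ Ak k := by
    intro w
    have hw : w ∈ Subgroup.closure (Set.range (FreeGroup.of : Fin k → FreeGroup (Fin k))) := by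
      rw [FreeGroup.closure_range_of]; trivial
    induction hw using Subgroup.closure_induction with
    | mem x hx =>
      obtain ⟨i, rfl⟩ := hx
      rw [fwdA_nR]
      exact nR_mem _ _ (Fin.succ_ne_zero i)
    | one => rw [fwdA_one]; exact one_mem _
    | mul x y hx hy ihx ihy =>
      have : fwdA 1 (x * y) = fwdA 1 x * fwdA 1 y := by
        rw [← fwdA_mul, mul_one]
      rw [this]; exact mul_mem ihx ihy
    | inv x hx ih =>
      have : fwdA 1 x⁻¹ = (fwdA 1 x)⁻¹ := by rw [fwdA_inv, inv_one]
      rw [this]; exact inv_mem ih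
  have : fwdA l r = fwdA l 1 * fwdA 1 r := by rw [← fwdA_mul, mul_one, one_mul]
  rw [this]
  exact mul_mem (h1 l) (h2 r)

lemma fwdA_kker (l r : FreeGroup (Fin k)) :
    (⟨fwdA l r, fwdA_mem l r⟩ : Ak k) ∈ Kker k := fun i => fwd_succ l r i

/-- The homomorphism `F_k × F_k → ker p`. -/
def phiK (k : ℕ) : FreeGroup (Fin k) × FreeGroup (Fin k) →* Kker k :=
  MonoidHom.mk' (fun p => ⟨⟨fwdA p.1 p.2, fwdA_mem _ _⟩, fwdA_kker _ _⟩)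
    (by
      intro p q
      apply Subtype.ext
      apply Subtype.ext
      exact fwdA_mul p.1 p.2 q.1 q.2)

lemma phiK_inj : Function.Injective (phiK k) := by
  refine (injective_iff_map_eq_one (phiK k)).2 fun p hp => ?_
  have h1 : fwdA p.1 p.2 = 1 := by
    have := congrArg (fun x : Kker k => ((x : Ak k) : MulAut (FreeGroup (Fin (k + 1))))) hp
    exact this
  have h2 : fwd p.1 p.2 (FreeGroup.of 0) = FreeGroup.of 0 := by
    have := congrArg (fun e : MulAut (FreeGroup (Fin (k + 1))) => e (FreeGroup.of 0)) h1
    exact this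
  rw [fwd_of0] at h2
  rw [← _root_.map_inv (embF k)] at h2
  obtain ⟨ha, hb⟩ := key h2
  have hp1 : p.1 = 1 := inv_eq_one.mp ha
  exact Prod.ext hp1 hb

lemma phiK_surj : Function.Surjective (phiK k) := by
  intro ψ
  obtain ⟨a, ha, b, hb, hab⟩ := (Ak_prop (ψ : Ak k).2).1.2
  rw [← embF_range] at ha hb
  obtain ⟨l1, rfl⟩ := MonoidHom.mem_range.mp ha
  obtain ⟨r, rfl⟩ := MonoidHom.mem_range.mp hb
  refine ⟨(l1⁻¹, r), ?_⟩
  apply Subtype.ext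
  apply Subtype.ext
  apply MulEquiv.toMonoidHom_injective
  refine FreeGroup.ext_hom _ _ fun p => ?_
  induction p using Fin.cases with
  | zero =>
    show fwd l1⁻¹ r (FreeGroup.of 0) = _
    rw [fwd_of0, _root_.map_inv, inv_inv]
    exact hab.symm
  | succ i =>
    show fwd l1⁻¹ r (FreeGroup.of i.succ) = _
    rw [fwd_succ]
    exact (ψ.2 i).symm

end PRA

open PRA in
/-- Every `ψ ∈ A_k` maps the subgroup `F_k = ⟨x_1,…,x_k⟩` of `F_{k+1}` onto
itself; every `ψ ∈ A_k` fixing each `x_i` (`1 ≤ i ≤ k`) sends `x_0` to `l·x_0·r` for unique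
`l, r ∈ F_k`; and the assignment `j(ψ) = (l⁻¹, r)` is a group isomorphism from the kernel of
the restriction homomorphism onto `F_k × F_k`. -/
theorem statement12 (k : ℕ) :
    (∀ ψ : MulAut (FreeGroup (Fin (k + 1))), ψ ∈ Ak k →
      Subgroup.map ψ.toMonoidHom (Fsub k) = Fsub k) ∧
    (∀ ψ : Ak k, ψ ∈ Kker k →
      ∃! lr : FreeGroup (Fin k) × FreeGroup (Fin k),
        (ψ : MulAut (FreeGroup (Fin (k + 1)))) (FreeGroup.of 0)
          = embF k lr.1 * FreeGroup.of 0 * embF k lr.2) ∧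
    ∃ jiso : Kker k ≃* FreeGroup (Fin k) × FreeGroup (Fin k),
      ∀ ψ : Kker k,
        ((ψ : Ak k) : MulAut (FreeGroup (Fin (k + 1)))) (FreeGroup.of 0)
          = embF k ((jiso ψ).1)⁻¹ * FreeGroup.of 0 * embF k (jiso ψ).2 := by
  refine ⟨fun ψ hψ => map_Fsub_eq hψ, ?_, ?_⟩
  · intro ψ hψ
    obtain ⟨a, ha, b, hb, hab⟩ := (Ak_prop ψ.2).1.2
    rw [← embF_range] at ha hb
    obtain ⟨l1, rfl⟩ := MonoidHom.mem_range.mp ha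
    obtain ⟨r, rfl⟩ := MonoidHom.mem_range.mp hb
    refine ⟨(l1, r), hab, ?_⟩
    rintro ⟨y1, y2⟩ hy
    have heq : embF k y1 * FreeGroup.of 0 * embF k y2
        = embF k l1 * FreeGroup.of 0 * embF k r := by
      rw [← hy, ← hab]
      rfl
    have hkey : embF k (l1⁻¹ * y1) * FreeGroup.of 0 * embF k (y2 * r⁻¹) = FreeGroup.of 0 := by
      rw [map_mul, map_mul, map_inv, map_inv]
      calc (embF k l1)⁻¹ * embF k y1 * FreeGroup.of 0 * (embF k y2 * (embF k r)⁻¹)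
          = (embF k l1)⁻¹ * (embF k y1 * FreeGroup.of 0 * embF k y2) * (embF k r)⁻¹ := by
            group
        _ = (embF k l1)⁻¹ * (embF k l1 * FreeGroup.of 0 * embF k r) * (embF k r)⁻¹ := by
            rw [heq]
        _ = FreeGroup.of 0 := by group
    obtain ⟨h1, h2⟩ := key hkey
    have hy1 : y1 = l1 := by
      have h3 := mul_eq_one_iff_inv_eq.mp h1
      rw [inv_inv] at h3
      exact h3.symm
    have hy2 : y2 = r := mul_inv_eq_one.mp h2
    exact Prod.ext hy1 hy2
  · refine ⟨(MulEquiv.ofBijective (phiK k) ⟨phiK_inj, phiK_surj⟩).symm, fun ψ => ?_⟩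
    set e := MulEquiv.ofBijective (phiK k) ⟨phiK_inj, phiK_surj⟩ with he
    have happ : phiK k (e.symm ψ) = ψ := e.apply_symm_apply ψ
    have h0 : ((ψ : Ak k) : MulAut (FreeGroup (Fin (k + 1)))) (FreeGroup.of 0)
        = fwd (e.symm ψ).1 (e.symm ψ).2 (FreeGroup.of 0) := by
      conv_lhs => rw [← happ]
      rfl
    rw [h0, fwd_of0, ← map_inv]
end
end

section
/- Let k ≥ 2 and let λ ∈ ℝ be such that Δ_k² − λ·Δ_k is a sum of squares in ℝ[A_k]. Then λ ≤ 8k. -/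
noncomputable section

namespace PRA

/-- The `*`-operation on the real group ring `ℝ[G]`: the linear extension of `g ↦ g⁻¹`. -/
def gstar {G : Type*} [Group G] (ξ : MonoidAlgebra ℝ G) : MonoidAlgebra ℝ G :=
  MonoidAlgebra.ofCoeff (Finsupp.mapDomain (fun g : G => g⁻¹) ξ.coeff)

/-- An element of `ℝ[G]` is a sum of squares if it equals `Σ_i ξ_i* ξ_i`
for finitely many `ξ_i ∈ ℝ[G]`. -/
def IsSOS {G : Type*} [Group G] (ξ : MonoidAlgebra ℝ G) : Prop :=
  ∃ (n : ℕ) (f : Fin n → MonoidAlgebra ℝ G), ξ = ∑ m : Fin n, gstar (f m) * f m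

variable {K : ℕ}

/-- The partial Laplacian
`Δ_{ij} = (1−L_{ij})(1−L_{ij})* + (1−R_{ij})(1−R_{ij})* ∈ ℝ[A_K]`
(for `i = j` both Nielsen automorphisms are `1` and `Δ_{ii} = 0`). -/
def Del (K : ℕ) (i j : Fin (K + 1)) (hj : j ≠ 0) : MonoidAlgebra ℝ (Ak K) :=
  (1 - MonoidAlgebra.of ℝ (Ak K) (Lg i j hj)) *
      gstar (1 - MonoidAlgebra.of ℝ (Ak K) (Lg i j hj)) +
    (1 - MonoidAlgebra.of ℝ (Ak K) (Rg i j hj)) *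
      gstar (1 - MonoidAlgebra.of ℝ (Ak K) (Rg i j hj))

/-- The embedding of the index range `{1,…,m}` into `{0,1,…,K}` for `m ≤ K`. -/
def idx {K m : ℕ} (h : m ≤ K) (s : Fin m) : Fin (K + 1) :=
  (Fin.castLE h s).succ

lemma idx_ne_zero {K m : ℕ} (h : m ≤ K) (s : Fin m) : idx h s ≠ 0 :=
  Fin.succ_ne_zero _

/-- `Δ_m^C = Σ_{s=1}^m Δ_{0s}`, as an element of `ℝ[A_K]`. -/
def DelC (K m : ℕ) (h : m ≤ K) : MonoidAlgebra ℝ (Ak K) :=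
  ∑ s : Fin m, Del K 0 (idx h s) (idx_ne_zero h s)

/-- `Δ_m^N = Σ_{1 ≤ i,j ≤ m} Δ_{ij}`, as an element of `ℝ[A_K]`. -/
def DelN (K m : ℕ) (h : m ≤ K) : MonoidAlgebra ℝ (Ak K) :=
  ∑ i : Fin m, ∑ j : Fin m, Del K (idx h i) (idx h j) (idx_ne_zero h j)

/-- The full non-normalized group Laplacian `Δ_K = Δ_K^C + Δ_K^N ∈ ℝ[A_K]`. -/
def DelFull (K : ℕ) : MonoidAlgebra ℝ (Ak K) :=
  DelC K K le_rfl + DelN K K le_rfl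

end PRA

namespace PRA13
open PRA

set_option synthInstance.maxHeartbeats 1000000
set_option maxHeartbeats 1000000

variable {n : ℕ}

/-- The mod-2 abelianization map of a free group. -/
def tau (n : ℕ) : FreeGroup (Fin n) →* Multiplicative (Fin n → ZMod 2) :=
  FreeGroup.lift fun i => Multiplicative.ofAdd (Pi.single i 1)

lemma tau_of (i : Fin n) : tau n (FreeGroup.of i) = Multiplicative.ofAdd (Pi.single i 1) :=
  FreeGroup.lift_apply_of

/-- The columns of the induced map on mod-2 homology. -/
def cvec (α : MulAut (FreeGroup (Fin n))) (i : Fin n) : Fin n → ZMod 2 :=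
  Multiplicative.toAdd (tau n (α (FreeGroup.of i)))

/-- The linear map on mod-2 homology induced by an automorphism. -/
def TL (α : MulAut (FreeGroup (Fin n))) : (Fin n → ZMod 2) →ₗ[ZMod 2] (Fin n → ZMod 2) where
  toFun v := ∑ i, v i • cvec α i
  map_add' v w := by
    simp [add_smul, Finset.sum_add_distrib]
  map_smul' r v := by
    simp only [Pi.smul_apply, smul_eq_mul, RingHom.id_apply, mul_smul, ← Finset.smul_sum]

lemma TL_apply (α : MulAut (FreeGroup (Fin n))) (v : Fin n → ZMod 2) :
    TL α v = ∑ i, v i • cvec α i := rfl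

lemma TL_single (α : MulAut (FreeGroup (Fin n))) (i : Fin n) :
    TL α (Pi.single i 1) = cvec α i := by
  rw [TL_apply, Finset.sum_eq_single i]
  · simp
  · intro b _ hb
    simp [Pi.single_eq_of_ne hb]
  · simp

lemma sum_single_eq (v : Fin n → ZMod 2) :
    (∑ i, v i • Pi.single i (1 : ZMod 2)) = v := by
  have h : ∀ i : Fin n, v i • Pi.single i (1 : ZMod 2) = (Pi.single i (v i) : Fin n → ZMod 2) := by
    intro i
    funext j
    rcases eq_or_ne j i with rfl | hj
    · simp
    · simp [Pi.single_eq_of_ne hj]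
  simp only [h, Finset.univ_sum_single]

lemma tau_apply_aut (α : MulAut (FreeGroup (Fin n))) (w : FreeGroup (Fin n)) :
    tau n (α w) = Multiplicative.ofAdd (TL α (Multiplicative.toAdd (tau n w))) := by
  have key : (tau n).comp α.toMonoidHom =
      MonoidHom.comp
        { toFun := fun z => Multiplicative.ofAdd (TL α (Multiplicative.toAdd z))
          map_one' := by simp
          map_mul' := by intro a b; simp } (tau n) := by
    apply FreeGroup.ext_hom
    intro a
    simp [tau_of, TL_single, cvec]
  exact DFunLike.congr_fun key w

lemma cvec_mul (α β : MulAut (FreeGroup (Fin n))) (i : Fin n) :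
    cvec (α * β) i = TL α (cvec β i) := by
  have h : (α * β) (FreeGroup.of i) = α (β (FreeGroup.of i)) := rfl
  unfold cvec
  rw [h, tau_apply_aut]
  simp

lemma TL_mul (α β : MulAut (FreeGroup (Fin n))) :
    TL (α * β) = (TL α).comp (TL β) := by
  refine LinearMap.ext fun v => ?_
  calc TL (α * β) v = ∑ i, v i • cvec (α * β) i := rfl
    _ = ∑ i, v i • TL α (cvec β i) := by
        refine Finset.sum_congr rfl fun i _ => ?_
        rw [cvec_mul]
    _ = ∑ i, TL α (v i • cvec β i) := by
        refine Finset.sum_congr rfl fun i _ => ?_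
        rw [map_smul]
    _ = TL α (∑ i, v i • cvec β i) := (map_sum _ _ _).symm
    _ = (TL α).comp (TL β) v := rfl

lemma TL_one : TL (1 : MulAut (FreeGroup (Fin n))) = LinearMap.id := by
  refine LinearMap.ext fun v => ?_
  have hc : ∀ i : Fin n, cvec (1 : MulAut (FreeGroup (Fin n))) i = Pi.single i 1 := by
    intro i
    unfold cvec
    simp [tau_of]
  rw [TL_apply]
  simp only [hc, sum_single_eq, LinearMap.id_apply]

instance actAk (K : ℕ) : MulAction (Ak K) (Fin (K + 1) → ZMod 2) where
  smul g v := TL (g : MulAut (FreeGroup (Fin (K + 1)))) v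
  one_smul v := by
    show TL ((1 : Ak K) : MulAut (FreeGroup (Fin (K + 1)))) v = v
    rw [show ((1 : Ak K) : MulAut (FreeGroup (Fin (K + 1)))) = 1 from rfl, TL_one,
      LinearMap.id_apply]
  mul_smul g h v := by
    show TL ((g * h : Ak K) : MulAut (FreeGroup (Fin (K + 1)))) v = _
    rw [show ((g * h : Ak K) : MulAut (FreeGroup (Fin (K + 1))))
        = (g : MulAut (FreeGroup (Fin (K + 1)))) * (h : MulAut (FreeGroup (Fin (K + 1))))
        from rfl, TL_mul]
    rfl

lemma smul_def {K : ℕ} (g : Ak K) (v : Fin (K + 1) → ZMod 2) :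
    g • v = TL (g : MulAut (FreeGroup (Fin (K + 1)))) v := rfl

/-- The permutation representation of `Ak K` on functions on mod-2 homology. -/
def rr (K : ℕ) : Representation ℝ (Ak K) ((Fin (K + 1) → ZMod 2) →₀ ℝ) :=
  { toFun := fun g => Finsupp.lmapDomain ℝ ℝ (g • ·)
    map_one' := by ext; simp
    map_mul' := fun x y => by ext; simp [mul_smul] }

lemma rr_single (K : ℕ) (g : Ak K) (x : Fin (K + 1) → ZMod 2) (r : ℝ) :
    rr K g (Finsupp.single x r) = Finsupp.single (g • x) r := by
  simp [rr]

lemma rr_apply (K : ℕ) (g : Ak K) (u : (Fin (K + 1) → ZMod 2) →₀ ℝ)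
    (x : Fin (K + 1) → ZMod 2) : rr K g u x = u (g⁻¹ • x) := by
  induction u using Finsupp.induction_linear with
  | zero => simp
  | add a b ha hb => simp only [map_add, Finsupp.add_apply, ha, hb]
  | single y c =>
      rw [rr_single, Finsupp.single_apply, Finsupp.single_apply]
      congr 1
      exact propext ⟨fun h => by rw [← h, inv_smul_smul], fun h => by rw [h, smul_inv_smul]⟩

/-- The base point `e₀`. -/
def pp (K : ℕ) : Fin (K + 1) → ZMod 2 := Pi.single 0 1

/-- The positive functional: matrix coefficient at `δ_{e₀}`. -/
def phi (K : ℕ) (ξ : MonoidAlgebra ℝ (Ak K)) : ℝ :=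
  ((rr K).asAlgebraHom ξ (Finsupp.single (pp K) 1)) (pp K)

lemma gstar_single {G : Type*} [Group G] (g : G) (c : ℝ) :
    gstar (MonoidAlgebra.single g c : MonoidAlgebra ℝ G) = MonoidAlgebra.single g⁻¹ c :=
  congrArg MonoidAlgebra.ofCoeff Finsupp.mapDomain_single

lemma gstar_add {G : Type*} [Group G] (a b : MonoidAlgebra ℝ G) :
    gstar (a + b) = gstar a + gstar b :=
  congrArg MonoidAlgebra.ofCoeff Finsupp.mapDomain_add

lemma gstar_sub {G : Type*} [Group G] (a b : MonoidAlgebra ℝ G) :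
    gstar (a - b) = gstar a - gstar b :=
  congrArg MonoidAlgebra.ofCoeff
    (map_sub (Finsupp.mapDomain.addMonoidHom fun g : G => g⁻¹) a.coeff b.coeff)

lemma adj (K : ℕ) (f : MonoidAlgebra ℝ (Ak K)) (u : (Fin (K + 1) → ZMod 2) →₀ ℝ)
    (x : Fin (K + 1) → ZMod 2) :
    ((rr K).asAlgebraHom (gstar f) u) x
      = ∑ y : Fin (K + 1) → ZMod 2,
          u y * ((rr K).asAlgebraHom f (Finsupp.single x 1)) y := by
  induction f using MonoidAlgebra.induction_linear with
  | zero => simp [gstar]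
  | add a b ha hb =>
      rw [gstar_add, map_add, map_add, LinearMap.add_apply, Finsupp.add_apply, ha, hb,
        ← Finset.sum_add_distrib]
      refine Finset.sum_congr rfl fun y _ => ?_
      rw [LinearMap.add_apply, Finsupp.add_apply, mul_add]
  | single g c =>
      rw [gstar_single, Representation.asAlgebraHom_single, Representation.asAlgebraHom_single,
        LinearMap.smul_apply, Finsupp.smul_apply]
      have h1 : ((rr K) g⁻¹ u) x = u (g • x) := by
        rw [rr_apply, inv_inv]
      have h2 : (rr K) g (Finsupp.single x 1) = Finsupp.single (g • x) (1 : ℝ) := by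
        rw [rr_single]
      rw [h1]
      simp only [LinearMap.smul_apply, h2, Finsupp.smul_apply, Finsupp.single_apply, smul_ite,
        smul_eq_mul, mul_one, mul_zero, smul_zero, mul_ite]
      rw [Finset.sum_ite_eq (Finset.univ) (g • x) (fun y => u y * c)]
      simp [mul_comm]

lemma phi_gstar_mul_self_nonneg (K : ℕ) (f : MonoidAlgebra ℝ (Ak K)) :
    0 ≤ phi K (gstar f * f) := by
  unfold phi
  rw [map_mul, Module.End.mul_apply,
    adj K f ((rr K).asAlgebraHom f (Finsupp.single (pp K) 1)) (pp K)]
  exact Finset.sum_nonneg fun y _ => mul_self_nonneg _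

lemma phi_sum (K : ℕ) {m : ℕ} (t : Fin m → MonoidAlgebra ℝ (Ak K)) :
    phi K (∑ i, t i) = ∑ i, phi K (t i) := by
  unfold phi
  rw [map_sum, LinearMap.sum_apply, Finsupp.finset_sum_apply]

lemma phi_sos (K : ℕ) (ξ : MonoidAlgebra ℝ (Ak K)) (h : IsSOS ξ) : 0 ≤ phi K ξ := by
  obtain ⟨m, f, rfl⟩ := h
  rw [phi_sum]
  exact Finset.sum_nonneg fun i _ => phi_gstar_mul_self_nonneg K (f i)

section generators

lemma zmod2_neg (a : ZMod 2) : -a = a := by revert a; decide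

lemma cvec_nL (i j m : Fin n) (hij : i ≠ j) :
    cvec (nL i j) m = Pi.single m 1 + (if m = i then Pi.single j 1 else 0) := by
  unfold cvec
  rw [nL, dif_neg hij]
  show Multiplicative.toAdd (tau n (lA i j (FreeGroup.of m))) = _
  rw [lA, FreeGroup.lift_apply_of]
  rcases eq_or_ne m i with rfl | hm
  · rw [if_pos rfl, if_pos rfl, map_mul, toAdd_mul, tau_of, tau_of]
    simp [add_comm]
  · rw [if_neg hm, if_neg hm, tau_of]
    simp

lemma cvec_nL_inv (i j m : Fin n) (hij : i ≠ j) :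
    cvec (nL i j)⁻¹ m = Pi.single m 1 + (if m = i then Pi.single j 1 else 0) := by
  unfold cvec
  rw [MulAut.inv_def, nL, dif_neg hij]
  show Multiplicative.toAdd (tau n (lB i j (FreeGroup.of m))) = _
  rw [lB, FreeGroup.lift_apply_of]
  rcases eq_or_ne m i with rfl | hm
  · rw [if_pos rfl, if_pos rfl, map_mul, map_inv, toAdd_mul, toAdd_inv, tau_of, tau_of]
    have : -(Pi.single j 1 : Fin n → ZMod 2) = Pi.single j 1 := by
      funext a
      exact zmod2_neg _
    simp only [toAdd_ofAdd, this]
    abel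
  · rw [if_neg hm, if_neg hm, tau_of]
    simp

lemma cvec_nR (i j m : Fin n) (hij : i ≠ j) :
    cvec (nR i j) m = Pi.single m 1 + (if m = i then Pi.single j 1 else 0) := by
  unfold cvec
  rw [nR, dif_neg hij]
  show Multiplicative.toAdd (tau n (rA i j (FreeGroup.of m))) = _
  rw [rA, FreeGroup.lift_apply_of]
  rcases eq_or_ne m i with rfl | hm
  · rw [if_pos rfl, if_pos rfl, map_mul, toAdd_mul, tau_of, tau_of]
    simp
  · rw [if_neg hm, if_neg hm, tau_of]
    simp

lemma cvec_nR_inv (i j m : Fin n) (hij : i ≠ j) :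
    cvec (nR i j)⁻¹ m = Pi.single m 1 + (if m = i then Pi.single j 1 else 0) := by
  unfold cvec
  rw [MulAut.inv_def, nR, dif_neg hij]
  show Multiplicative.toAdd (tau n (rB i j (FreeGroup.of m))) = _
  rw [rB, FreeGroup.lift_apply_of]
  rcases eq_or_ne m i with rfl | hm
  · rw [if_pos rfl, if_pos rfl, map_mul, map_inv, toAdd_mul, toAdd_inv, tau_of, tau_of]
    have : -(Pi.single j 1 : Fin n → ZMod 2) = Pi.single j 1 := by
      funext a
      exact zmod2_neg _
    simp only [toAdd_ofAdd, this]
  · rw [if_neg hm, if_neg hm, tau_of]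
    simp

lemma TL_trans (α : MulAut (FreeGroup (Fin n))) (i j : Fin n)
    (hc : ∀ m, cvec α m = Pi.single m 1 + (if m = i then Pi.single j 1 else 0))
    (v : Fin n → ZMod 2) :
    TL α v = v + v i • (Pi.single j 1 : Fin n → ZMod 2) := by
  rw [TL_apply]
  simp only [hc, smul_add]
  rw [Finset.sum_add_distrib, sum_single_eq]
  congr 1
  simp only [smul_ite, smul_zero]
  rw [Finset.sum_ite_eq' Finset.univ i (fun m => v m • (Pi.single j 1 : Fin n → ZMod 2))]
  simp

variable {K : ℕ}

lemma smul_Lg (i j : Fin (K + 1)) (hj : j ≠ 0) (hij : i ≠ j) (v : Fin (K + 1) → ZMod 2) :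
    (Lg i j hj) • v = v + v i • (Pi.single j 1 : Fin (K + 1) → ZMod 2) :=
  TL_trans (nL i j) i j (fun m => cvec_nL i j m hij) v

lemma smul_Lg_inv (i j : Fin (K + 1)) (hj : j ≠ 0) (hij : i ≠ j) (v : Fin (K + 1) → ZMod 2) :
    (Lg i j hj)⁻¹ • v = v + v i • (Pi.single j 1 : Fin (K + 1) → ZMod 2) :=
  TL_trans (nL i j)⁻¹ i j (fun m => cvec_nL_inv i j m hij) v

lemma smul_Rg (i j : Fin (K + 1)) (hj : j ≠ 0) (hij : i ≠ j) (v : Fin (K + 1) → ZMod 2) :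
    (Rg i j hj) • v = v + v i • (Pi.single j 1 : Fin (K + 1) → ZMod 2) :=
  TL_trans (nR i j) i j (fun m => cvec_nR i j m hij) v

lemma smul_Rg_inv (i j : Fin (K + 1)) (hj : j ≠ 0) (hij : i ≠ j) (v : Fin (K + 1) → ZMod 2) :
    (Rg i j hj)⁻¹ • v = v + v i • (Pi.single j 1 : Fin (K + 1) → ZMod 2) :=
  TL_trans (nR i j)⁻¹ i j (fun m => cvec_nR_inv i j m hij) v

end generators

section del

variable {K : ℕ}

lemma one_sub_mul_gstar {G : Type*} [Group G] (g : G) :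
    (1 - MonoidAlgebra.of ℝ G g) * gstar (1 - MonoidAlgebra.of ℝ G g)
      = 2 - MonoidAlgebra.of ℝ G g - MonoidAlgebra.of ℝ G g⁻¹ := by
  have h1 : gstar (1 - MonoidAlgebra.of ℝ G g) = 1 - MonoidAlgebra.of ℝ G g⁻¹ := by
    rw [gstar_sub]
    congr 1
    · show gstar (MonoidAlgebra.single 1 1) = _
      rw [gstar_single, inv_one]
      rfl
    · exact gstar_single g 1
  rw [h1, mul_sub, sub_mul, sub_mul, one_mul, mul_one, one_mul,
    show MonoidAlgebra.of ℝ G g * MonoidAlgebra.of ℝ G g⁻¹ = 1 by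
      rw [← map_mul, mul_inv_cancel, map_one],
    show (2 : MonoidAlgebra ℝ G) = 1 + 1 from by norm_num]
  abel

lemma del_expand (i j : Fin (K + 1)) (hj : j ≠ 0) :
    Del K i j hj = (2 - MonoidAlgebra.of ℝ (Ak K) (Lg i j hj)
        - MonoidAlgebra.of ℝ (Ak K) (Lg i j hj)⁻¹)
      + (2 - MonoidAlgebra.of ℝ (Ak K) (Rg i j hj)
        - MonoidAlgebra.of ℝ (Ak K) (Rg i j hj)⁻¹) := by
  rw [Del, one_sub_mul_gstar, one_sub_mul_gstar]

lemma del_apply (i j : Fin (K + 1)) (hj : j ≠ 0) (hij : i ≠ j) (x : Fin (K + 1) → ZMod 2) :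
    (rr K).asAlgebraHom (Del K i j hj) (Finsupp.single x 1)
      = (4 : ℝ) • (Finsupp.single x 1
          - Finsupp.single (x + x i • (Pi.single j 1 : Fin (K + 1) → ZMod 2)) (1 : ℝ)) := by
  have e1 : (Lg i j hj) • x = x + x i • (Pi.single j 1 : Fin (K + 1) → ZMod 2) :=
    smul_Lg i j hj hij x
  have e2 : (Lg i j hj)⁻¹ • x = x + x i • (Pi.single j 1 : Fin (K + 1) → ZMod 2) :=
    smul_Lg_inv i j hj hij x
  have e3 : (Rg i j hj) • x = x + x i • (Pi.single j 1 : Fin (K + 1) → ZMod 2) :=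
    smul_Rg i j hj hij x
  have e4 : (Rg i j hj)⁻¹ • x = x + x i • (Pi.single j 1 : Fin (K + 1) → ZMod 2) :=
    smul_Rg_inv i j hj hij x
  rw [del_expand i j hj,
    show (2 : MonoidAlgebra ℝ (Ak K)) = 1 + 1 by norm_num]
  simp only [map_add, map_sub, map_one, Representation.asAlgebraHom_of, LinearMap.add_apply,
    LinearMap.sub_apply, Module.End.one_apply]
  rw [show (rr K) (Lg i j hj) (Finsupp.single x 1) = Finsupp.single ((Lg i j hj) • x) (1 : ℝ)
      from rr_single _ _ _ _,
    show (rr K) (Lg i j hj)⁻¹ (Finsupp.single x 1)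
        = Finsupp.single ((Lg i j hj)⁻¹ • x) (1 : ℝ)
      from rr_single _ _ _ _,
    show (rr K) (Rg i j hj) (Finsupp.single x 1) = Finsupp.single ((Rg i j hj) • x) (1 : ℝ)
      from rr_single _ _ _ _,
    show (rr K) (Rg i j hj)⁻¹ (Finsupp.single x 1)
        = Finsupp.single ((Rg i j hj)⁻¹ • x) (1 : ℝ)
      from rr_single _ _ _ _,
    e1, e2, e3, e4]
  module

lemma del_zero (i : Fin (K + 1)) (hj : i ≠ 0) : Del K i i hj = 0 := by
  have hL : Lg i i hj = 1 := by
    apply Subtype.ext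
    show nL i i = 1
    rw [nL, dif_pos rfl]
  have hR : Rg i i hj = 1 := by
    apply Subtype.ext
    show nR i i = 1
    rw [nR, dif_pos rfl]
  rw [Del, hL, hR, map_one, sub_self]
  simp

end del

section points

variable {K : ℕ}

lemma idx_inj {m : ℕ} (h : m ≤ K) {s t : Fin m} (hst : idx h s = idx h t) : s = t :=
  Fin.castLE_injective h (Fin.succ_injective _ hst)

lemma single_one_ne_zero (a : Fin (K + 1)) :
    (Pi.single a 1 : Fin (K + 1) → ZMod 2) ≠ 0 := by
  intro hzero
  have := congrFun hzero a
  rw [Pi.single_eq_same] at this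
  exact one_ne_zero this

lemma single_inj {a b : Fin (K + 1)}
    (h : (Pi.single a 1 : Fin (K + 1) → ZMod 2) = Pi.single b 1) : a = b := by
  by_contra hab
  have := congrFun h a
  rw [Pi.single_eq_same, Pi.single_eq_of_ne hab] at this
  exact one_ne_zero this

lemma xadd_self (v : Fin (K + 1) → ZMod 2) : v + v = 0 := by
  funext a
  have hz : ∀ b : ZMod 2, b + b = 0 := by decide
  exact hz (v a)

/-- The points `e₀ + e_{idx t}`. -/
def qq (K : ℕ) (t : Fin K) : Fin (K + 1) → ZMod 2 :=
  pp K + Pi.single (idx le_rfl t) 1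

lemma pp_zero : pp K 0 = 1 := Pi.single_eq_same _ _

lemma pp_idx {m : ℕ} (h : m ≤ K) (s : Fin m) : pp K (idx h s) = 0 :=
  Pi.single_eq_of_ne (idx_ne_zero h s) _

lemma qq_zero (t : Fin K) : qq K t 0 = 1 := by
  unfold qq
  rw [Pi.add_apply, pp_zero, Pi.single_eq_of_ne (Ne.symm (idx_ne_zero le_rfl t)), add_zero]

lemma qq_idx (t s : Fin K) : qq K t (idx le_rfl s) = if s = t then 1 else 0 := by
  unfold qq
  rw [Pi.add_apply, pp_idx le_rfl s, zero_add]
  rcases eq_or_ne s t with rfl | hst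
  · rw [if_pos rfl, Pi.single_eq_same]
  · rw [if_neg hst, Pi.single_eq_of_ne (fun hc => hst (idx_inj le_rfl hc))]

lemma qq_ne_pp (t : Fin K) : qq K t ≠ pp K := by
  intro hc
  have h0 : pp K + Pi.single (idx le_rfl t) 1 = pp K := hc
  exact single_one_ne_zero _ (add_eq_left.mp h0)

lemma qq_add (t s : Fin K) :
    qq K t + Pi.single (idx le_rfl s) 1 = pp K ↔ s = t := by
  constructor
  · intro h
    have h2 : (Pi.single (idx le_rfl t) 1 : Fin (K + 1) → ZMod 2)
        + Pi.single (idx le_rfl s) 1 = 0 := by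
      rw [qq, add_assoc] at h
      exact add_eq_left.mp h
    have h3 : (Pi.single (idx le_rfl s) 1 : Fin (K + 1) → ZMod 2)
        = Pi.single (idx le_rfl t) 1 := by
      have h4 := congrArg (fun z => Pi.single (idx le_rfl t) 1 + z) h2
      simp only [add_zero] at h4
      rw [← add_assoc, xadd_self, zero_add] at h4
      exact h4
    exact idx_inj le_rfl (single_inj h3)
  · rintro rfl
    rw [qq, add_assoc, xadd_self, add_zero]

end points

section evaluation

variable {K : ℕ}

lemma delC_apply (x : Fin (K + 1) → ZMod 2) (hx : x 0 = 1) :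
    (rr K).asAlgebraHom (DelC K K le_rfl) (Finsupp.single x 1)
      = ∑ s : Fin K, (4 : ℝ) • (Finsupp.single x 1
          - Finsupp.single (x + Pi.single (idx le_rfl s) 1) (1 : ℝ)) := by
  rw [DelC, map_sum, LinearMap.sum_apply]
  refine Finset.sum_congr rfl fun s _ => ?_
  rw [del_apply 0 (idx le_rfl s) (idx_ne_zero le_rfl s) (Ne.symm (idx_ne_zero le_rfl s)) x,
    hx, one_smul]

lemma delN_pp :
    (rr K).asAlgebraHom (DelN K K le_rfl) (Finsupp.single (pp K) 1) = 0 := by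
  rw [DelN, map_sum, LinearMap.sum_apply]
  refine Finset.sum_eq_zero fun i _ => ?_
  rw [map_sum, LinearMap.sum_apply]
  refine Finset.sum_eq_zero fun j _ => ?_
  rcases eq_or_ne i j with rfl | hij
  · rw [del_zero, map_zero, LinearMap.zero_apply]
  · rw [del_apply _ _ _ (fun hc => hij (idx_inj le_rfl hc)) _, pp_idx le_rfl i, zero_smul,
      add_zero, sub_self, smul_zero]

lemma delN_qq (t : Fin K) :
    ((rr K).asAlgebraHom (DelN K K le_rfl) (Finsupp.single (qq K t) 1)) (pp K) = 0 := by
  rw [DelN, map_sum, LinearMap.sum_apply, Finsupp.finset_sum_apply]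
  refine Finset.sum_eq_zero fun i _ => ?_
  rw [map_sum, LinearMap.sum_apply, Finsupp.finset_sum_apply]
  refine Finset.sum_eq_zero fun j _ => ?_
  rcases eq_or_ne i j with rfl | hij
  · rw [del_zero, map_zero, LinearMap.zero_apply, Finsupp.zero_apply]
  · rw [del_apply _ _ _ (fun hc => hij (idx_inj le_rfl hc)) _, qq_idx]
    rcases eq_or_ne i t with rfl | hit
    · rw [if_pos rfl, one_smul, Finsupp.smul_apply, Finsupp.sub_apply, Finsupp.single_apply,
        Finsupp.single_apply, if_neg (qq_ne_pp i),
        if_neg (fun hc => hij ((qq_add i j).mp hc).symm)]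
      simp
    · rw [if_neg hit, zero_smul, add_zero, sub_self, smul_zero, Finsupp.zero_apply]

lemma E_pp :
    (rr K).asAlgebraHom (DelFull K) (Finsupp.single (pp K) 1)
      = ∑ s : Fin K, (4 : ℝ) • (Finsupp.single (pp K) 1
          - Finsupp.single (qq K s) (1 : ℝ)) := by
  rw [DelFull, map_add, LinearMap.add_apply, delC_apply (pp K) pp_zero, delN_pp, add_zero]
  rfl

lemma E_pp_at :
    ((rr K).asAlgebraHom (DelFull K) (Finsupp.single (pp K) 1)) (pp K) = 4 * K := by
  rw [E_pp, Finsupp.finset_sum_apply]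
  have hterm : ∀ s : Fin K,
      ((4 : ℝ) • (Finsupp.single (pp K) (1 : ℝ) - Finsupp.single (qq K s) (1 : ℝ))) (pp K)
        = 4 := by
    intro s
    rw [Finsupp.smul_apply, Finsupp.sub_apply, Finsupp.single_apply, if_pos rfl,
      Finsupp.single_apply, if_neg (qq_ne_pp s)]
    norm_num
  rw [Finset.sum_congr rfl fun s _ => hterm s, Finset.sum_const, Finset.card_univ,
    Fintype.card_fin, nsmul_eq_mul]
  ring

lemma E_qq_at (t : Fin K) :
    ((rr K).asAlgebraHom (DelFull K) (Finsupp.single (qq K t) 1)) (pp K) = -4 := by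
  rw [DelFull, map_add, LinearMap.add_apply, Finsupp.add_apply, delN_qq, add_zero,
    delC_apply (qq K t) (qq_zero t), Finsupp.finset_sum_apply]
  have hterm : ∀ s : Fin K,
      (((4 : ℝ) • (Finsupp.single (qq K t) (1 : ℝ)
          - Finsupp.single (qq K t + Pi.single (idx le_rfl s) 1) (1 : ℝ))
        : (Fin (K + 1) → ZMod 2) →₀ ℝ)) (pp K)
        = if s = t then -4 else 0 := by
    intro s
    rw [Finsupp.smul_apply, Finsupp.sub_apply, Finsupp.single_apply,
      if_neg (qq_ne_pp t), Finsupp.single_apply]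
    rcases eq_or_ne s t with rfl | hst
    · rw [if_pos ((qq_add s s).mpr rfl), if_pos rfl]
      norm_num
    · rw [if_neg (fun hc => hst ((qq_add t s).mp hc)), if_neg hst]
      norm_num
  rw [Finset.sum_congr rfl fun s _ => hterm s,
    Finset.sum_ite_eq' Finset.univ t (fun _ => (-4 : ℝ))]
  simp

lemma phi_Delta : phi K (DelFull K) = 4 * K :=
  E_pp_at

lemma phi_Delta_sq : phi K (DelFull K * DelFull K) = (K : ℝ) * (16 * K + 16) := by
  unfold phi
  rw [map_mul, Module.End.mul_apply, E_pp, map_sum, Finsupp.finset_sum_apply]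
  have hterm : ∀ s : Fin K,
      ((rr K).asAlgebraHom (DelFull K)
          ((4 : ℝ) • (Finsupp.single (pp K) (1 : ℝ)
            - Finsupp.single (qq K s) (1 : ℝ)))) (pp K)
        = 16 * K + 16 := by
    intro s
    rw [map_smul, map_sub, Finsupp.smul_apply, Finsupp.sub_apply, E_pp_at, E_qq_at]
    norm_num
    ring
  rw [Finset.sum_congr rfl fun s _ => hterm s, Finset.sum_const, Finset.card_univ,
    Fintype.card_fin, nsmul_eq_mul]

lemma phi_sub_smul (a b : MonoidAlgebra ℝ (Ak K)) (c : ℝ) :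
    phi K (a - c • b) = phi K a - c * phi K b := by
  unfold phi
  rw [map_sub, map_smul, LinearMap.sub_apply, LinearMap.smul_apply, Finsupp.sub_apply,
    Finsupp.smul_apply, smul_eq_mul]

end evaluation

end PRA13

open PRA in
/-- If `k ≥ 2` and `Δ_k² − λ·Δ_k` is a sum of squares in `ℝ[A_k]`,
then `λ ≤ 8k`. -/
theorem statement13 (k : ℕ) (hk : 2 ≤ k) (lam : ℝ)
    (h : IsSOS (DelFull k * DelFull k - lam • DelFull k)) :
    lam ≤ 8 * (k : ℝ) := by
  have hpos := PRA13.phi_sos k _ h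
  rw [PRA13.phi_sub_smul, PRA13.phi_Delta_sq, PRA13.phi_Delta] at hpos
  have hk' : (2 : ℝ) ≤ (k : ℝ) := by exact_mod_cast hk
  nlinarith [hpos, hk']
end
end

section
/- Let k ≥ 2, let V = (ℤ/3ℤ)^k \ {0}, and let SL_k(ℤ/3ℤ) act on ℂ^V by the permutation representation (g·f)(x) = f(g^{-1}x). Let v = Σ_{i=1}^k (δ_{e_i} − δ_{−e_i}) ∈ ℂ^V, where e_1,…,e_k are the standard basis vectors and δ_y is the indicator function of y. Then v is orthogonal to the constant functions, ‖v‖² = 2k, and for every elementary transvection matrix E = I + a·E_{ij} with i ≠ j and a = ±1, one has ‖E·v − v‖ = √(2/k)·‖v‖. -/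
noncomputable section

namespace Stmt14

def vv (k : ℕ) (x : Fin k → ZMod 3) : ℂ :=
  ∑ i : Fin k, ((if x = Pi.single i 1 then (1 : ℂ) else 0) - (if x = -Pi.single i 1 then 1 else 0))

variable {k : ℕ}

lemma P_inj {m n : Fin k} (h : (Pi.single m 1 : Fin k → ZMod 3) = Pi.single n 1) : m = n := by
  by_contra hne
  have h1 := congrFun h m
  rw [Pi.single_eq_same, Pi.single_apply, if_neg hne] at h1
  exact one_ne_zero h1

lemma P_ne_negP (m n : Fin k) : (Pi.single m 1 : Fin k → ZMod 3) ≠ -Pi.single n 1 := by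
  intro h
  have h1 := congrFun h m
  rw [Pi.single_eq_same, Pi.neg_apply, Pi.single_apply] at h1
  split_ifs at h1 <;> exact absurd h1 (by decide)

lemma P_ne_zero (m : Fin k) : (Pi.single m 1 : Fin k → ZMod 3) ≠ 0 := by
  intro h
  have h1 := congrFun h m
  rw [Pi.single_eq_same] at h1
  exact one_ne_zero h1

lemma vv_P (m : Fin k) : vv k (Pi.single m 1) = 1 := by
  unfold vv
  rw [Finset.sum_congr rfl (fun i _ => show _ = if i = m then (1:ℂ) else 0 by
    rw [if_neg (P_ne_negP m i), sub_zero]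
    rcases eq_or_ne i m with rfl | h
    · rw [if_pos rfl, if_pos rfl]
    · rw [if_neg (fun hh => h (P_inj hh).symm), if_neg h])]
  simp [Finset.sum_ite_eq']

lemma vv_N (m : Fin k) : vv k (-Pi.single m 1) = -1 := by
  unfold vv
  rw [Finset.sum_congr rfl (fun i _ => show _ = if i = m then (-1:ℂ) else 0 by
    rw [if_neg (fun hh => P_ne_negP i m hh.symm), zero_sub]
    rcases eq_or_ne i m with rfl | h
    · rw [if_pos rfl, if_pos rfl]
    · rw [if_neg (fun hh => h (P_inj (neg_inj.mp hh)).symm), if_neg h, neg_zero])]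
  simp [Finset.sum_ite_eq']

lemma vv_zero_of (x : Fin k → ZMod 3)
    (h : ∀ m, x ≠ Pi.single m 1 ∧ x ≠ -Pi.single m 1) : vv k x = 0 := by
  unfold vv
  refine Finset.sum_eq_zero fun i _ => ?_
  rw [if_neg (h i).1, if_neg (h i).2, sub_zero]

lemma not_single (x : Fin k → ZMod 3) {i j : Fin k} (hij : i ≠ j) (hi : x i ≠ 0) (hj : x j ≠ 0) :
    ∀ m, x ≠ Pi.single m 1 ∧ x ≠ -Pi.single m 1 := by
  intro m
  constructor <;> intro h <;> rcases eq_or_ne m i with rfl | hmi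
  · exact hj (by rw [h, Pi.single_apply, if_neg (Ne.symm hij)])
  · exact hi (by rw [h, Pi.single_apply, if_neg (Ne.symm hmi)])
  · exact hj (by rw [h, Pi.neg_apply, Pi.single_apply, if_neg (Ne.symm hij), neg_zero])
  · exact hi (by rw [h, Pi.neg_apply, Pi.single_apply, if_neg (Ne.symm hmi), neg_zero])

lemma sum_ne_zero_eq {α β : Type*} [Fintype α] [DecidableEq α] [AddCommMonoid β]
    (z : α) (f : α → β) (hf : f z = 0) :
    ∑ x : {y : α // y ≠ z}, f x.val = ∑ x, f x := by
  rw [← Finset.sum_subtype (Finset.univ.erase z) (by simp) f, Finset.sum_erase _ hf]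

lemma pw2 (x : Fin k → ZMod 3) :
    Complex.normSq (vv k x) =
      ∑ i : Fin k, ((if x = Pi.single i 1 then (1 : ℝ) else 0)
        + if x = -Pi.single i 1 then 1 else 0) := by
  by_cases h1 : ∃ m, x = Pi.single m 1
  · obtain ⟨m, rfl⟩ := h1
    rw [vv_P]
    rw [Finset.sum_congr rfl (fun i _ => show _ = if i = m then (1:ℝ) else 0 by
      rw [if_neg (P_ne_negP m i), add_zero]
      rcases eq_or_ne i m with rfl | h
      · rw [if_pos rfl, if_pos rfl]
      · rw [if_neg (fun hh => h (P_inj hh).symm), if_neg h])]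
    simp [Finset.sum_ite_eq']
  by_cases h2 : ∃ m, x = -Pi.single m 1
  · obtain ⟨m, rfl⟩ := h2
    rw [vv_N]
    rw [Finset.sum_congr rfl (fun i _ => show _ = if i = m then (1:ℝ) else 0 by
      rw [if_neg (fun hh => P_ne_negP i m hh.symm), zero_add]
      rcases eq_or_ne i m with rfl | h
      · rw [if_pos rfl, if_pos rfl]
      · rw [if_neg (fun hh => h (P_inj (neg_inj.mp hh)).symm), if_neg h])]
    simp [Finset.sum_ite_eq']
  · push_neg at h1 h2
    rw [vv_zero_of x (fun m => ⟨h1 m, h2 m⟩)]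
    symm
    simp only [map_zero]
    refine Finset.sum_eq_zero fun i _ => ?_
    rw [if_neg (h1 i), if_neg (h2 i), add_zero]

lemma single_neg' (i : Fin k) (a : ZMod 3) :
    (Pi.single i (-a) : Fin k → ZMod 3) = -Pi.single i a := by
  funext l
  rcases eq_or_ne l i with rfl | h
  · rw [Pi.single_eq_same, Pi.neg_apply, Pi.single_eq_same]
  · rw [Pi.single_eq_of_ne h, Pi.neg_apply, Pi.single_eq_of_ne h, neg_zero]

lemma pw3 {i j : Fin k} (hij : i ≠ j) {a : ZMod 3} (ha : a = 1 ∨ a = -1) (x : Fin k → ZMod 3) :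
    Complex.normSq (vv k (x - Pi.single i (a * x j)) - vv k x)
      = (if x = Pi.single j 1 then (1 : ℝ) else 0)
        + (if x = -Pi.single j 1 then 1 else 0)
        + (if x = Pi.single j 1 + Pi.single i a then 1 else 0)
        + (if x = -(Pi.single j 1 + Pi.single i a) then 1 else 0) := by
  have ha0 : a ≠ 0 := by rcases ha with rfl | rfl <;> decide
  by_cases h1 : x = Pi.single j 1
  · subst h1
    have e1 : vv k ((Pi.single j 1 : Fin k → ZMod 3) - Pi.single i (a * (Pi.single j 1 : Fin k → ZMod 3) j)) = 0 := by
      rw [Pi.single_eq_same, mul_one]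
      refine vv_zero_of _ (not_single _ hij ?_ ?_)
      · simp [Pi.single_eq_same, Pi.single_eq_of_ne hij, ha0]
      · simp [Pi.single_eq_same, Pi.single_eq_of_ne (Ne.symm hij)]
    rw [e1, vv_P, zero_sub, Complex.normSq_neg, Complex.normSq_one]
    rw [if_pos rfl, if_neg (P_ne_negP j j),
      if_neg (show (Pi.single j 1 : Fin k → ZMod 3) ≠ Pi.single j 1 + Pi.single i a by
        intro h; apply ha0
        have h2 := congrFun h i
        simp [Pi.single_eq_same, Pi.single_eq_of_ne hij] at h2
        exact h2.symm),
      if_neg (show (Pi.single j 1 : Fin k → ZMod 3) ≠ -(Pi.single j 1 + Pi.single i a) by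
        intro h
        have h2 := congrFun h j
        simp [Pi.single_eq_same, Pi.single_eq_of_ne (Ne.symm hij)] at h2
        revert h2; decide)]
    norm_num
  by_cases h2 : x = -Pi.single j 1
  · subst h2
    have e1 : vv k ((-Pi.single j 1 : Fin k → ZMod 3) - Pi.single i (a * (-Pi.single j 1 : Fin k → ZMod 3) j)) = 0 := by
      refine vv_zero_of _ (not_single _ hij ?_ ?_)
      · simp [Pi.single_eq_same, Pi.single_eq_of_ne hij, ha0]
      · simp [Pi.single_eq_same, Pi.single_eq_of_ne (Ne.symm hij)]
    rw [e1, vv_N, zero_sub, Complex.normSq_neg, Complex.normSq_neg, Complex.normSq_one]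
    rw [if_neg (fun h => P_ne_negP j j h.symm), if_pos rfl,
      if_neg (show (-Pi.single j 1 : Fin k → ZMod 3) ≠ Pi.single j 1 + Pi.single i a by
        intro h
        have h2 := congrFun h j
        simp [Pi.single_eq_same, Pi.single_eq_of_ne (Ne.symm hij)] at h2
        revert h2; decide),
      if_neg (show (-Pi.single j 1 : Fin k → ZMod 3) ≠ -(Pi.single j 1 + Pi.single i a) by
        intro h; apply ha0
        have h2 := congrFun (neg_inj.mp h) i
        simp [Pi.single_eq_same, Pi.single_eq_of_ne hij] at h2
        exact h2.symm)]
    norm_num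
  by_cases h3 : x = Pi.single j 1 + Pi.single i a
  · subst h3
    have hxj : (Pi.single j 1 + Pi.single i a : Fin k → ZMod 3) j = 1 := by
      simp [Pi.single_eq_same, Pi.single_eq_of_ne (Ne.symm hij)]
    have e1 : (Pi.single j 1 + Pi.single i a : Fin k → ZMod 3)
        - Pi.single i (a * (Pi.single j 1 + Pi.single i a : Fin k → ZMod 3) j)
        = Pi.single j 1 := by
      rw [hxj, mul_one, add_sub_cancel_right]
    have e2 : vv k (Pi.single j 1 + Pi.single i a : Fin k → ZMod 3) = 0 := by
      refine vv_zero_of _ (not_single _ hij ?_ ?_)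
      · simp [Pi.single_eq_same, Pi.single_eq_of_ne (Ne.symm hij), Pi.single_eq_of_ne hij, ha0]
      · simp [Pi.single_eq_same, Pi.single_eq_of_ne (Ne.symm hij), Pi.single_eq_of_ne hij]
    rw [e1, vv_P, e2, sub_zero, Complex.normSq_one]
    rw [if_neg (show (Pi.single j 1 + Pi.single i a : Fin k → ZMod 3) ≠ Pi.single j 1 by
        intro h; apply ha0
        have h2 := congrFun h i
        simpa [Pi.single_eq_same, Pi.single_eq_of_ne hij] using h2),
      if_neg (show (Pi.single j 1 + Pi.single i a : Fin k → ZMod 3) ≠ -Pi.single j 1 by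
        intro h
        have h2 := congrFun h j
        simp [Pi.single_eq_same, Pi.single_eq_of_ne (Ne.symm hij)] at h2
        revert h2; decide),
      if_pos rfl,
      if_neg (show (Pi.single j 1 + Pi.single i a : Fin k → ZMod 3)
          ≠ -(Pi.single j 1 + Pi.single i a) by
        intro h
        have h2 := congrFun h j
        simp [Pi.single_eq_same, Pi.single_eq_of_ne (Ne.symm hij)] at h2
        revert h2; decide)]
    norm_num
  by_cases h4 : x = -(Pi.single j 1 + Pi.single i a)
  · subst h4
    have hxj : (-(Pi.single j 1 + Pi.single i a) : Fin k → ZMod 3) j = -1 := by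
      simp [Pi.single_eq_same, Pi.single_eq_of_ne (Ne.symm hij)]
    have e1 : (-(Pi.single j 1 + Pi.single i a) : Fin k → ZMod 3)
        - Pi.single i (a * (-(Pi.single j 1 + Pi.single i a) : Fin k → ZMod 3) j)
        = -Pi.single j 1 := by
      rw [hxj, mul_neg_one, single_neg', sub_neg_eq_add, neg_add]
      abel
    have e2 : vv k (-(Pi.single j 1 + Pi.single i a) : Fin k → ZMod 3) = 0 := by
      refine vv_zero_of _ (not_single _ hij ?_ ?_)
      · simp [Pi.single_eq_same, Pi.single_eq_of_ne (Ne.symm hij), Pi.single_eq_of_ne hij, ha0]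
      · simp [Pi.single_eq_same, Pi.single_eq_of_ne (Ne.symm hij), Pi.single_eq_of_ne hij]
    rw [e1, vv_N, e2, sub_zero, Complex.normSq_neg, Complex.normSq_one]
    rw [if_neg (show (-(Pi.single j 1 + Pi.single i a) : Fin k → ZMod 3) ≠ Pi.single j 1 by
        intro h; apply ha0
        have h2 := congrFun h i
        simp [Pi.single_eq_same, Pi.single_eq_of_ne hij] at h2
        simpa using h2),
      if_neg (show (-(Pi.single j 1 + Pi.single i a) : Fin k → ZMod 3) ≠ -Pi.single j 1 by
        intro h; apply ha0
        have h2 := congrFun (neg_inj.mp h) i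
        simpa [Pi.single_eq_same, Pi.single_eq_of_ne hij] using h2),
      if_neg (show (-(Pi.single j 1 + Pi.single i a) : Fin k → ZMod 3)
          ≠ Pi.single j 1 + Pi.single i a by
        intro h
        have h2 := congrFun h j
        simp [Pi.single_eq_same, Pi.single_eq_of_ne (Ne.symm hij)] at h2
        revert h2; decide),
      if_pos rfl]
    norm_num
  · rw [if_neg h1, if_neg h2, if_neg h3, if_neg h4]
    by_cases hxj : x j = 0
    · rw [hxj, mul_zero, Pi.single_zero, sub_zero, sub_self, map_zero]
      norm_num
    · have hTj : ((x - Pi.single i (a * x j) : Fin k → ZMod 3)) j = x j := by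
        simp [Pi.single_eq_of_ne (Ne.symm hij)]
      have hx0 : vv k x = 0 := by
        refine vv_zero_of _ fun m => ⟨?_, ?_⟩ <;> intro h
        · rcases eq_or_ne m j with rfl | hmj
          · exact h1 h
          · exact hxj (by rw [h, Pi.single_apply, if_neg (Ne.symm hmj)])
        · rcases eq_or_ne m j with rfl | hmj
          · exact h2 h
          · exact hxj (by rw [h, Pi.neg_apply, Pi.single_apply, if_neg (Ne.symm hmj), neg_zero])
      have hT0 : vv k (x - Pi.single i (a * x j)) = 0 := by
        refine vv_zero_of _ fun m => ⟨?_, ?_⟩ <;> intro h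
        · rcases eq_or_ne j m with rfl | hmj
          · have hxj1 : x j = 1 := by rw [← hTj, h, Pi.single_eq_same]
            apply h3
            have h5 := eq_add_of_sub_eq h
            rw [hxj1, mul_one] at h5
            exact h5
          · exact hxj (by rw [← hTj, h, Pi.single_apply, if_neg hmj])
        · rcases eq_or_ne j m with rfl | hmj
          · have hxjm1 : x j = -1 := by rw [← hTj, h, Pi.neg_apply, Pi.single_eq_same]
            apply h4
            have h5 := eq_add_of_sub_eq h
            rw [hxjm1, mul_neg_one, single_neg'] at h5
            rw [h5, neg_add]
          · exact hxj (by rw [← hTj, h, Pi.neg_apply, Pi.single_apply,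
              if_neg hmj, neg_zero])
      rw [hx0, hT0, sub_zero, map_zero]
      norm_num

end Stmt14

open Stmt14 in
/-- Let `V = (ℤ/3ℤ)^k \ {0}` with the permutation action of `SL_k(ℤ/3ℤ)`
on `ℂ^V`, `(g·f)(x) = f(g⁻¹x)`, and let `v = Σ_i (δ_{e_i} − δ_{−e_i})`. Then `v` is
orthogonal to the constant functions, `‖v‖² = 2k`, and for every elementary transvection
`E = I + a·E_{ij}` (`i ≠ j`, `a = ±1`) one has `‖E·v − v‖ = √(2/k)·‖v‖`. -/
theorem statement14 (k : ℕ) (hk : 2 ≤ k)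
    (v : (Fin k → ZMod 3) → ℂ)
    (hv : v = fun x => ∑ i : Fin k,
      ((if x = Pi.single i 1 then (1 : ℂ) else 0) - (if x = -Pi.single i 1 then 1 else 0)))
    (E : Matrix.SpecialLinearGroup (Fin k) (ZMod 3)) (i j : Fin k) (hij : i ≠ j)
    (a : ZMod 3) (ha : a = 1 ∨ a = -1)
    (hE : (E : Matrix (Fin k) (Fin k) (ZMod 3)) = 1 + a • Matrix.single i j 1) :
    (∑ x : {y : Fin k → ZMod 3 // y ≠ 0}, v x.val = 0) ∧
      (∑ x : {y : Fin k → ZMod 3 // y ≠ 0}, Complex.normSq (v x.val)) = 2 * k ∧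
      Real.sqrt (∑ x : {y : Fin k → ZMod 3 // y ≠ 0},
          Complex.normSq
            (v (((E⁻¹ : Matrix.SpecialLinearGroup (Fin k) (ZMod 3)) :
                Matrix (Fin k) (Fin k) (ZMod 3)).mulVec x.val) - v x.val))
        = Real.sqrt (2 / k) *
            Real.sqrt (∑ x : {y : Fin k → ZMod 3 // y ≠ 0}, Complex.normSq (v x.val)) := by
  have hv' : v = vv k := hv
  subst hv'
  have hk0 : (k : ℝ) ≠ 0 := Nat.cast_ne_zero.mpr (by omega)
  have hvv0 : vv k 0 = 0 :=
    vv_zero_of 0 fun m => ⟨fun h => P_ne_zero m h.symm,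
      fun h => P_ne_zero m (neg_eq_zero.mp h.symm)⟩
  -- the inverse matrix
  have hBB : Matrix.single i j (1 : ZMod 3) * Matrix.single i j 1 = 0 :=
    Matrix.single_mul_single_of_ne 1 i j i (Ne.symm hij) 1
  have hsq : (a • Matrix.single i j (1 : ZMod 3)) *
      (a • Matrix.single i j (1 : ZMod 3)) = 0 := by
    rw [Matrix.smul_mul, Matrix.mul_smul, hBB, smul_zero, smul_zero]
  have h2 : (E : Matrix (Fin k) (Fin k) (ZMod 3)) *
      (1 - a • Matrix.single i j 1) = 1 := by
    rw [hE, mul_sub, mul_one, add_mul, one_mul, hsq, add_zero, add_sub_cancel_right]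
  have hc : ((E⁻¹ : Matrix.SpecialLinearGroup (Fin k) (ZMod 3)) :
      Matrix (Fin k) (Fin k) (ZMod 3)) * (E : Matrix (Fin k) (Fin k) (ZMod 3)) = 1 := by
    rw [← Matrix.SpecialLinearGroup.coe_mul, inv_mul_cancel, Matrix.SpecialLinearGroup.coe_one]
  have hEinv : ((E⁻¹ : Matrix.SpecialLinearGroup (Fin k) (ZMod 3)) :
      Matrix (Fin k) (Fin k) (ZMod 3)) = 1 - a • Matrix.single i j 1 := by
    calc ((E⁻¹ : Matrix.SpecialLinearGroup (Fin k) (ZMod 3)) : Matrix (Fin k) (Fin k) (ZMod 3))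
        = ↑E⁻¹ * ((E : Matrix (Fin k) (Fin k) (ZMod 3)) *
            (1 - a • Matrix.single i j 1)) := by rw [h2, mul_one]
      _ = (↑E⁻¹ * (E : Matrix (Fin k) (Fin k) (ZMod 3))) *
            (1 - a • Matrix.single i j 1) := by rw [mul_assoc]
      _ = _ := by rw [hc, one_mul]
  have hmv : ∀ x : Fin k → ZMod 3,
      ((E⁻¹ : Matrix.SpecialLinearGroup (Fin k) (ZMod 3)) :
        Matrix (Fin k) (Fin k) (ZMod 3)).mulVec x = x - Pi.single i (a * x j) := by
    intro x
    funext l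
    rw [hEinv, Matrix.sub_mulVec, Matrix.one_mulVec, Matrix.smul_mulVec,
      Matrix.single_mulVec]
    rcases eq_or_ne l i with rfl | h
    · simp [smul_eq_mul]
    · simp [h, Pi.single_eq_of_ne h, Function.update_apply, smul_eq_mul]
  have key2 : (∑ x : {y : Fin k → ZMod 3 // y ≠ 0}, Complex.normSq (vv k x.val))
      = 2 * (k : ℝ) := by
    rw [sum_ne_zero_eq 0 (fun y => Complex.normSq (vv k y)) (show Complex.normSq (vv k 0) = 0 by rw [hvv0, map_zero])]
    rw [Finset.sum_congr rfl fun x _ => pw2 x, Finset.sum_comm]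
    simp [Finset.sum_add_distrib, Finset.sum_ite_eq']
    ring
  refine ⟨?_, key2, ?_⟩
  · rw [sum_ne_zero_eq 0 (vv k) hvv0]
    unfold vv
    rw [Finset.sum_comm]
    refine Finset.sum_eq_zero fun m _ => ?_
    rw [Finset.sum_sub_distrib]
    simp [Finset.sum_ite_eq']
  · have key3 : (∑ x : {y : Fin k → ZMod 3 // y ≠ 0},
        Complex.normSq
          (vv k (((E⁻¹ : Matrix.SpecialLinearGroup (Fin k) (ZMod 3)) :
              Matrix (Fin k) (Fin k) (ZMod 3)).mulVec x.val) - vv k x.val)) = 4 := by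
      rw [sum_ne_zero_eq 0
        (fun y => Complex.normSq
          (vv k (((E⁻¹ : Matrix.SpecialLinearGroup (Fin k) (ZMod 3)) :
              Matrix (Fin k) (Fin k) (ZMod 3)).mulVec y) - vv k y))
        (by show Complex.normSq _ = 0; rw [Matrix.mulVec_zero, hvv0, sub_zero, map_zero])]
      rw [Finset.sum_congr rfl fun x _ => by rw [hmv x]]
      rw [Finset.sum_congr rfl fun x _ => pw3 hij ha x]
      simp [Finset.sum_add_distrib, Finset.sum_ite_eq']
      norm_num
    rw [key3, key2, ← Real.sqrt_mul (by positivity)]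
    congr 1
    field_simp
    ring
end
end

section
/- Let 4 ≤ k ≤ K be integers. Then in ℝ[A_K] one has the identities S(Adj_k^N) = (K−3)!·(k−2)·(k−1)·k·Adj_K^N and S(Opp_k^N) = (K−4)!·(k−3)·(k−2)·(k−1)·k·Opp_K^N. -/
noncomputable section

set_option linter.unusedSectionVars false

namespace PRA

variable {α : Type*} [DecidableEq α]

/-- The automorphism of the free group induced by a permutation of the generators. -/
def permAut (e : α ≃ α) : MulAut (FreeGroup α) := FreeGroup.freeGroupCongr e

lemma permAut_apply_of (e : α ≃ α) (a : α) :
    permAut e (FreeGroup.of a) = FreeGroup.of (e a) := by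
  simp [permAut]

lemma permAut_inv_apply_of (e : α ≃ α) (a : α) :
    (permAut e)⁻¹ (FreeGroup.of a) = FreeGroup.of (e.symm a) := by
  show ((permAut e).symm) (FreeGroup.of a) = _
  rw [permAut, FreeGroup.freeGroupCongr_symm]
  exact permAut_apply_of e.symm a

lemma nL_apply_of {i j : α} (h : i ≠ j) (a : α) :
    nL i j (FreeGroup.of a)
      = if a = i then FreeGroup.of j * FreeGroup.of a else FreeGroup.of a := by
  rw [nL, dif_neg h]
  show lA i j (FreeGroup.of a) = _
  simp [lA]

lemma nR_apply_of {i j : α} (h : i ≠ j) (a : α) :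
    nR i j (FreeGroup.of a)
      = if a = i then FreeGroup.of a * FreeGroup.of j else FreeGroup.of a := by
  rw [nR, dif_neg h]
  show rA i j (FreeGroup.of a) = _
  simp [rA]

lemma permAut_conj_nL (e : α ≃ α) (i j : α) :
    permAut e * nL i j * (permAut e)⁻¹ = nL (e i) (e j) := by
  by_cases h : i = j
  · subst h
    rw [nL, dif_pos rfl, nL, dif_pos rfl, mul_one, mul_inv_cancel]
  · have h' : e i ≠ e j := fun hc => h (e.injective hc)
    apply MulEquiv.toMonoidHom_injective
    apply FreeGroup.ext_hom
    intro a
    show (permAut e) (nL i j ((permAut e)⁻¹ (FreeGroup.of a))) = nL (e i) (e j) (FreeGroup.of a)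
    rw [permAut_inv_apply_of, nL_apply_of h, nL_apply_of h']
    by_cases ha : a = e i
    · rw [if_pos (by rw [ha, Equiv.symm_apply_apply]), if_pos ha, map_mul,
        permAut_apply_of, permAut_apply_of, ha, Equiv.apply_symm_apply]
    · rw [if_neg (fun hc => ha (by rw [← e.apply_symm_apply a, hc])), if_neg ha,
        permAut_apply_of, Equiv.apply_symm_apply]

lemma permAut_conj_nR (e : α ≃ α) (i j : α) :
    permAut e * nR i j * (permAut e)⁻¹ = nR (e i) (e j) := by
  by_cases h : i = j
  · subst h
    rw [nR, dif_pos rfl, nR, dif_pos rfl, mul_one, mul_inv_cancel]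
  · have h' : e i ≠ e j := fun hc => h (e.injective hc)
    apply MulEquiv.toMonoidHom_injective
    apply FreeGroup.ext_hom
    intro a
    show (permAut e) (nR i j ((permAut e)⁻¹ (FreeGroup.of a))) = nR (e i) (e j) (FreeGroup.of a)
    rw [permAut_inv_apply_of, nR_apply_of h, nR_apply_of h']
    by_cases ha : a = e i
    · rw [if_pos (by rw [ha, Equiv.symm_apply_apply]), if_pos ha, map_mul,
        permAut_apply_of, permAut_apply_of, ha, Equiv.apply_symm_apply]
    · rw [if_neg (fun hc => ha (by rw [← e.apply_symm_apply a, hc])), if_neg ha,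
        permAut_apply_of, Equiv.apply_symm_apply]

lemma conjA_mem {k : ℕ} (e : Fin (k + 1) ≃ Fin (k + 1)) (he : e 0 = 0)
    {ψ : MulAut (FreeGroup (Fin (k + 1)))} (hψ : ψ ∈ Ak k) :
    permAut e * ψ * (permAut e)⁻¹ ∈ Ak k := by
  induction hψ using Subgroup.closure_induction with
  | mem x hx =>
      obtain ⟨i, j, hij, hj, hx⟩ := hx
      have hij' : e i ≠ e j := fun hc => hij (e.injective hc)
      have hj' : e j ≠ 0 := fun hc => hj (e.injective (by rw [hc, he]))
      rcases hx with rfl | rfl | rfl | rfl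
      · exact Subgroup.subset_closure ⟨e i, e j, hij', hj', Or.inl (permAut_conj_nL e i j)⟩
      · refine Subgroup.subset_closure ⟨e i, e j, hij', hj', Or.inr (Or.inl ?_)⟩
        rw [← permAut_conj_nL e i j]; group
      · exact Subgroup.subset_closure
          ⟨e i, e j, hij', hj', Or.inr (Or.inr (Or.inl (permAut_conj_nR e i j)))⟩
      · refine Subgroup.subset_closure ⟨e i, e j, hij', hj', Or.inr (Or.inr (Or.inr ?_))⟩
        rw [← permAut_conj_nR e i j]; group
  | one =>
      have h1 : permAut e * 1 * (permAut e)⁻¹ = 1 := by group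
      rw [h1]; exact (Ak k).one_mem
  | mul x y _ _ ihx ihy =>
      have hmul : permAut e * (x * y) * (permAut e)⁻¹
          = (permAut e * x * (permAut e)⁻¹) * (permAut e * y * (permAut e)⁻¹) := by group
      rw [hmul]; exact (Ak k).mul_mem ihx ihy
  | inv x _ ihx =>
      have hinv : permAut e * x⁻¹ * (permAut e)⁻¹
          = (permAut e * x * (permAut e)⁻¹)⁻¹ := by group
      rw [hinv]; exact (Ak k).inv_mem ihx

/-- The permutation of `{0, 1, …, K}` induced by a permutation of `{1, …, K}` fixing `0`. -/
def extPerm (K : ℕ) (σ : Equiv.Perm (Fin K)) : Equiv.Perm (Fin (K + 1)) :=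
  (finSuccEquiv K).trans ((Equiv.optionCongr σ).trans (finSuccEquiv K).symm)

lemma extPerm_zero (K : ℕ) (σ : Equiv.Perm (Fin K)) : extPerm K σ 0 = 0 := by
  simp [extPerm]

/-- The action of a permutation `σ ∈ S_K` on `A_K` by conjugation by the automorphism of
`F_{K+1}` permuting `x_1, …, x_K` according to `σ` and fixing `x_0`;
it satisfies `σ.L_{ij} = L_{σ(i)σ(j)}` and `σ.R_{ij} = R_{σ(i)σ(j)}`. -/
def conjPerm (K : ℕ) (σ : Equiv.Perm (Fin K)) (ψ : Ak K) : Ak K :=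
  ⟨permAut (extPerm K σ) * (ψ : MulAut (FreeGroup (Fin (K + 1)))) * (permAut (extPerm K σ))⁻¹,
    conjA_mem (extPerm K σ) (extPerm_zero K σ) ψ.2⟩

/-- The symmetrization operator `S(ξ) = Σ_{σ ∈ S_K} σ.ξ` on `ℝ[A_K]`. -/
def symmize (K : ℕ) (ξ : MonoidAlgebra ℝ (Ak K)) : MonoidAlgebra ℝ (Ak K) :=
  ∑ σ : Equiv.Perm (Fin K), MonoidAlgebra.ofCoeff (Finsupp.mapDomain (conjPerm K σ) ξ.coeff)

end PRA
namespace PRA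

/-- `Adj_m^N = Σ_{|{i,j,l}|=3} Δ_{ij}(Δ_{il}+Δ_{li}+Δ_{jl}+Δ_{lj})`,
as an element of `ℝ[A_K]`. -/
def AdjN (K m : ℕ) (h : m ≤ K) : MonoidAlgebra ℝ (Ak K) :=
  ∑ i : Fin m, ∑ j : Fin m, ∑ l : Fin m,
    if i ≠ j ∧ i ≠ l ∧ j ≠ l then
      Del K (idx h i) (idx h j) (idx_ne_zero h j) *
        (Del K (idx h i) (idx h l) (idx_ne_zero h l) +
          Del K (idx h l) (idx h i) (idx_ne_zero h i) +
          Del K (idx h j) (idx h l) (idx_ne_zero h l) +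
          Del K (idx h l) (idx h j) (idx_ne_zero h j))
    else 0

/-- `Opp_m^N = Σ_{|{i,j,l,m'}|=4} Δ_{ij}Δ_{lm'}`, as an element of `ℝ[A_K]`. -/
def OppN (K m : ℕ) (h : m ≤ K) : MonoidAlgebra ℝ (Ak K) :=
  ∑ i : Fin m, ∑ j : Fin m, ∑ l : Fin m, ∑ n : Fin m,
    if i ≠ j ∧ i ≠ l ∧ i ≠ n ∧ j ≠ l ∧ j ≠ n ∧ l ≠ n then
      Del K (idx h i) (idx h j) (idx_ne_zero h j) * Del K (idx h l) (idx h n) (idx_ne_zero h n)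
    else 0

end PRA

namespace PRA

open Function

section AuxCount

lemma exists_perm_comp {n N : ℕ} (e₀ e₁ : Fin n ↪ Fin N) :
    ∃ τ : Equiv.Perm (Fin N), ∀ x, τ (e₀ x) = e₁ x := by
  classical
  have h₀ := e₀.injective
  have h₁ := e₁.injective
  let E : {x // x ∈ Set.range e₀} ≃ {x // x ∈ Set.range e₁} :=
    (Equiv.ofInjective e₀ h₀).symm.trans (Equiv.ofInjective e₁ h₁)
  have hcard : Fintype.card {x // ¬ x ∈ Set.range e₀}
      = Fintype.card {x // ¬ x ∈ Set.range e₁} := by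
    rw [Fintype.card_subtype_compl, Fintype.card_subtype_compl]
    rw [Fintype.card_congr E]
  obtain ⟨F⟩ := Fintype.card_eq.mp hcard
  refine ⟨Equiv.subtypeCongr E F, fun x => ?_⟩
  have hp : (e₀ x) ∈ Set.range e₀ := ⟨x, rfl⟩
  have hEq : Equiv.subtypeCongr E F (e₀ x) = (E ⟨e₀ x, hp⟩ : Fin N) := by
    rw [Equiv.subtypeCongr, Equiv.trans_apply, Equiv.sumCompl_symm_apply_of_pos hp]
    simp
  rw [hEq]
  show (e₁ ((Equiv.ofInjective e₀ h₀).symm ⟨e₀ x, hp⟩) : Fin N) = e₁ x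
  congr 1
  apply h₀
  exact Equiv.apply_ofInjective_symm h₀ ⟨e₀ x, hp⟩

variable {M : Type*} [AddCommGroup M] [Module ℝ M]

lemma sum_perm_comp_const {n K : ℕ} (f : (Fin n ↪ Fin K) → M) (e₀ e₁ : Fin n ↪ Fin K) :
    ∑ σ : Equiv.Perm (Fin K), f (e₀.trans σ.toEmbedding)
      = ∑ σ : Equiv.Perm (Fin K), f (e₁.trans σ.toEmbedding) := by
  obtain ⟨τ, hτ⟩ := exists_perm_comp e₀ e₁
  refine Fintype.sum_equiv (Equiv.mulRight τ⁻¹) _ _ fun σ => ?_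
  congr 1
  ext x
  simp only [Function.Embedding.trans_apply, Equiv.coe_toEmbedding, Equiv.coe_mulRight,
    Equiv.Perm.mul_apply]
  rw [← hτ x, Equiv.Perm.coe_inv, Equiv.symm_apply_apply]

lemma nsmul_cancel {a : ℕ} (ha : a ≠ 0) {x y : M} (h : a • x = a • y) : x = y := by
  have h2 : (a : ℝ) • x = (a : ℝ) • y := by
    rwa [Nat.cast_smul_eq_nsmul, Nat.cast_smul_eq_nsmul]
  exact smul_right_injective M (Nat.cast_ne_zero.mpr ha) h2

lemma key_count {n K k : ℕ} (hn : n ≤ k) (hkK : k ≤ K) (f : (Fin n ↪ Fin K) → M) :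
    ∑ e : Fin n ↪ Fin k, ∑ σ : Equiv.Perm (Fin K),
        f ((e.trans (Fin.castLEEmb hkK)).trans σ.toEmbedding)
      = ((K - n).factorial * k.descFactorial n) • ∑ e : Fin n ↪ Fin K, f e := by
  classical
  have hnK : n ≤ K := hn.trans hkK
  set estar : Fin n ↪ Fin K := Fin.castLEEmb hnK with hestar
  set C : M := ∑ σ : Equiv.Perm (Fin K), f (estar.trans σ.toEmbedding) with hC
  have hconst : ∀ e : Fin n ↪ Fin K,
      ∑ σ : Equiv.Perm (Fin K), f (e.trans σ.toEmbedding) = C :=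
    fun e => sum_perm_comp_const f e estar
  set S : M := ∑ e : Fin n ↪ Fin K, f e with hS
  have hKfact : ∑ e : Fin n ↪ Fin K, ∑ σ : Equiv.Perm (Fin K), f (e.trans σ.toEmbedding)
      = K.factorial • S := by
    rw [Finset.sum_comm]
    have h1 : ∀ σ : Equiv.Perm (Fin K),
        ∑ e : Fin n ↪ Fin K, f (e.trans σ.toEmbedding) = S := by
      intro σ
      exact Fintype.sum_equiv (Equiv.embeddingCongr (Equiv.refl (Fin n)) σ) _ _ fun e => rfl
    rw [Finset.sum_congr rfl fun σ _ => h1 σ, Finset.sum_const, Finset.card_univ,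
      Fintype.card_perm, Fintype.card_fin]
  have hKC : (K.descFactorial n) • C = K.factorial • S := by
    rw [← hKfact, Finset.sum_congr rfl fun e _ => hconst e, Finset.sum_const, Finset.card_univ,
      Fintype.card_embedding_eq, Fintype.card_fin, Fintype.card_fin]
  have hCval : C = (K - n).factorial • S := by
    have hdf : K.descFactorial n ≠ 0 := fun h0 =>
      absurd (Nat.descFactorial_eq_zero_iff_lt.mp h0) (Nat.not_lt.mpr hnK)
    apply nsmul_cancel hdf
    rw [hKC, smul_smul, Nat.mul_comm, Nat.factorial_mul_descFactorial hnK]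
  calc ∑ e : Fin n ↪ Fin k, ∑ σ : Equiv.Perm (Fin K),
        f ((e.trans (Fin.castLEEmb hkK)).trans σ.toEmbedding)
      = ∑ _e : Fin n ↪ Fin k, C := Finset.sum_congr rfl fun e _ => hconst _
    _ = (k.descFactorial n) • C := by
        rw [Finset.sum_const, Finset.card_univ, Fintype.card_embedding_eq, Fintype.card_fin,
          Fintype.card_fin]
    _ = ((K - n).factorial * k.descFactorial n) • S := by
        rw [hCval, smul_smul, Nat.mul_comm]

end AuxCount

section SumIte

variable {M : Type*} [AddCommMonoid M]

lemma sum_ite3 {m : ℕ} (g : Fin m → Fin m → Fin m → M) :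
    (∑ i : Fin m, ∑ j : Fin m, ∑ l : Fin m,
        if i ≠ j ∧ i ≠ l ∧ j ≠ l then g i j l else 0)
      = ∑ e : Fin 3 ↪ Fin m, g (e 0) (e 1) (e 2) := by
  classical
  have h1 : (∑ p : Fin m × Fin m × Fin m,
        if p.1 ≠ p.2.1 ∧ p.1 ≠ p.2.2 ∧ p.2.1 ≠ p.2.2 then g p.1 p.2.1 p.2.2 else 0)
      = ∑ i : Fin m, ∑ j : Fin m, ∑ l : Fin m,
          if i ≠ j ∧ i ≠ l ∧ j ≠ l then g i j l else 0 := by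
    rw [Fintype.sum_prod_type]
    exact Finset.sum_congr rfl fun i _ => Fintype.sum_prod_type _
  rw [← h1, ← Finset.sum_filter]
  refine (Finset.sum_bij (fun (e : Fin 3 ↪ Fin m) _ => ((e 0, e 1, e 2) :
      Fin m × Fin m × Fin m)) ?_ ?_ ?_ ?_).symm
  · intro e _
    simp only [Finset.mem_filter, Finset.mem_univ, true_and]
    exact ⟨e.injective.ne (by decide), e.injective.ne (by decide), e.injective.ne (by decide)⟩
  · intro e _ f _ hef
    simp only [Prod.mk.injEq] at hef
    obtain ⟨h0, h1, h2⟩ := hef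
    ext x
    fin_cases x
    · exact congrArg Fin.val h0
    · exact congrArg Fin.val h1
    · exact congrArg Fin.val h2
  · intro p hp
    simp only [Finset.mem_filter, Finset.mem_univ, true_and] at hp
    refine ⟨⟨![p.1, p.2.1, p.2.2], ?_⟩, Finset.mem_univ _, ?_⟩
    · intro x y hxy
      fin_cases x <;> fin_cases y <;> simp_all
    · rfl
  · intro e _
    rfl

set_option maxHeartbeats 1000000 in
lemma sum_ite4 {m : ℕ} (g : Fin m → Fin m → Fin m → Fin m → M) :
    (∑ i : Fin m, ∑ j : Fin m, ∑ l : Fin m, ∑ n : Fin m,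
        if i ≠ j ∧ i ≠ l ∧ i ≠ n ∧ j ≠ l ∧ j ≠ n ∧ l ≠ n then g i j l n else 0)
      = ∑ e : Fin 4 ↪ Fin m, g (e 0) (e 1) (e 2) (e 3) := by
  classical
  have h1 : (∑ p : Fin m × Fin m × Fin m × Fin m,
        if p.1 ≠ p.2.1 ∧ p.1 ≠ p.2.2.1 ∧ p.1 ≠ p.2.2.2 ∧ p.2.1 ≠ p.2.2.1 ∧ p.2.1 ≠ p.2.2.2 ∧
            p.2.2.1 ≠ p.2.2.2 then g p.1 p.2.1 p.2.2.1 p.2.2.2 else 0)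
      = ∑ i : Fin m, ∑ j : Fin m, ∑ l : Fin m, ∑ n : Fin m,
          if i ≠ j ∧ i ≠ l ∧ i ≠ n ∧ j ≠ l ∧ j ≠ n ∧ l ≠ n then g i j l n else 0 := by
    rw [Fintype.sum_prod_type]
    refine Finset.sum_congr rfl fun i _ => ?_
    rw [Fintype.sum_prod_type]
    exact Finset.sum_congr rfl fun j _ => Fintype.sum_prod_type _
  rw [← h1, ← Finset.sum_filter]
  refine (Finset.sum_bij (fun (e : Fin 4 ↪ Fin m) _ => ((e 0, e 1, e 2, e 3) :
      Fin m × Fin m × Fin m × Fin m)) ?_ ?_ ?_ ?_).symm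
  · intro e _
    simp only [Finset.mem_filter, Finset.mem_univ, true_and]
    exact ⟨e.injective.ne (by decide), e.injective.ne (by decide), e.injective.ne (by decide),
      e.injective.ne (by decide), e.injective.ne (by decide), e.injective.ne (by decide)⟩
  · intro e _ f _ hef
    simp only [Prod.mk.injEq] at hef
    obtain ⟨h0, h1, h2, h3⟩ := hef
    ext x
    fin_cases x
    · exact congrArg Fin.val h0
    · exact congrArg Fin.val h1
    · exact congrArg Fin.val h2
    · exact congrArg Fin.val h3
  · intro p hp
    clear h1
    simp only [Finset.mem_filter, Finset.mem_univ, true_and] at hp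
    refine ⟨⟨![p.1, p.2.1, p.2.2.1, p.2.2.2], ?_⟩, Finset.mem_univ _, ?_⟩
    · intro x y hxy
      fin_cases x <;> fin_cases y <;> simp_all
    · rfl
  · intro e _
    rfl

end SumIte

section Conj

variable {K : ℕ}

/-- `conjPerm K σ` as a monoid homomorphism. -/
def cHom (K : ℕ) (σ : Equiv.Perm (Fin K)) : Ak K →* Ak K where
  toFun := conjPerm K σ
  map_one' := by
    apply Subtype.ext
    show permAut (extPerm K σ) * ((1 : Ak K) : MulAut (FreeGroup (Fin (K + 1))))
        * (permAut (extPerm K σ))⁻¹ = ((1 : Ak K) : MulAut (FreeGroup (Fin (K + 1))))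
    rw [OneMemClass.coe_one]
    group
  map_mul' x y := by
    apply Subtype.ext
    show permAut (extPerm K σ) * ((x * y : Ak K) : MulAut (FreeGroup (Fin (K + 1))))
        * (permAut (extPerm K σ))⁻¹ = _
    rw [MulMemClass.coe_mul, MulMemClass.coe_mul]
    show _ = (permAut (extPerm K σ) * (x : MulAut (FreeGroup (Fin (K + 1))))
        * (permAut (extPerm K σ))⁻¹)
      * (permAut (extPerm K σ) * (y : MulAut (FreeGroup (Fin (K + 1))))
        * (permAut (extPerm K σ))⁻¹)
    group

lemma extPerm_succ (σ : Equiv.Perm (Fin K)) (a : Fin K) :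
    extPerm K σ a.succ = (σ a).succ := by
  simp [extPerm]

lemma extPerm_ne_zero (σ : Equiv.Perm (Fin K)) {j : Fin (K + 1)} (hj : j ≠ 0) :
    extPerm K σ j ≠ 0 := fun hc =>
  hj ((extPerm K σ).injective (hc.trans (extPerm_zero K σ).symm))

lemma conjPerm_Lg (σ : Equiv.Perm (Fin K)) (i j : Fin (K + 1)) (hj : j ≠ 0)
    (hj' : extPerm K σ j ≠ 0) :
    conjPerm K σ (Lg i j hj) = Lg (extPerm K σ i) (extPerm K σ j) hj' :=
  Subtype.ext (permAut_conj_nL (extPerm K σ) i j)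

lemma conjPerm_Rg (σ : Equiv.Perm (Fin K)) (i j : Fin (K + 1)) (hj : j ≠ 0)
    (hj' : extPerm K σ j ≠ 0) :
    conjPerm K σ (Rg i j hj) = Rg (extPerm K σ i) (extPerm K σ j) hj' :=
  Subtype.ext (permAut_conj_nR (extPerm K σ) i j)

lemma gstar_sub {G : Type*} [Group G] (x y : MonoidAlgebra ℝ G) :
    gstar (x - y) = gstar x - gstar y := by
  simp only [gstar, MonoidAlgebra.coeff_sub, Finsupp.mapDomain_sub, MonoidAlgebra.ofCoeff_sub]

lemma gstar_one {G : Type*} [Group G] : gstar (1 : MonoidAlgebra ℝ G) = 1 := by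
  rw [show gstar (1 : MonoidAlgebra ℝ G) = MonoidAlgebra.mapDomain (fun g : G => g⁻¹) 1 from rfl,
    MonoidAlgebra.one_def, MonoidAlgebra.mapDomain_single, inv_one]

lemma gstar_of {G : Type*} [Group G] (g : G) :
    gstar (MonoidAlgebra.of ℝ G g) = MonoidAlgebra.of ℝ G g⁻¹ := by
  rw [show gstar (MonoidAlgebra.of ℝ G g)
      = MonoidAlgebra.mapDomain (fun g : G => g⁻¹) (MonoidAlgebra.of ℝ G g) from rfl,
    MonoidAlgebra.of_apply, MonoidAlgebra.of_apply, MonoidAlgebra.mapDomain_single]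

lemma Del_eq (i j : Fin (K + 1)) (hj : j ≠ 0) :
    Del K i j hj
      = (1 - MonoidAlgebra.of ℝ (Ak K) (Lg i j hj))
          * (1 - MonoidAlgebra.of ℝ (Ak K) (Lg i j hj)⁻¹)
        + (1 - MonoidAlgebra.of ℝ (Ak K) (Rg i j hj))
          * (1 - MonoidAlgebra.of ℝ (Ak K) (Rg i j hj)⁻¹) := by
  rw [Del, gstar_sub, gstar_sub, gstar_one, gstar_of, gstar_of]

lemma mapDomain_one_sub_of {G H : Type*} [Group G] [Group H] (φ : G →* H) (g : G) :
    MonoidAlgebra.mapDomain φ ((1 : MonoidAlgebra ℝ G) - MonoidAlgebra.of ℝ G g)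
      = 1 - MonoidAlgebra.of ℝ H (φ g) := by
  have hsub : MonoidAlgebra.mapDomain φ ((1 : MonoidAlgebra ℝ G) - MonoidAlgebra.of ℝ G g)
      = MonoidAlgebra.mapDomain φ (1 : MonoidAlgebra ℝ G)
        - MonoidAlgebra.mapDomain φ (MonoidAlgebra.of ℝ G g) :=
    map_sub (MonoidAlgebra.mapDomainRingHom ℝ φ) _ _
  rw [hsub, MonoidAlgebra.mapDomain_one φ, MonoidAlgebra.of_apply, MonoidAlgebra.of_apply]
  congr 1
  exact MonoidAlgebra.mapDomain_single

lemma mapDomain_conj_Del (σ : Equiv.Perm (Fin K)) {i j i' j' : Fin (K + 1)} (hj : j ≠ 0)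
    (hj' : j' ≠ 0) (hi2 : extPerm K σ i = i') (hj2 : extPerm K σ j = j') :
    MonoidAlgebra.mapDomain (conjPerm K σ) (Del K i j hj) = Del K i' j' hj' := by
  subst hi2
  subst hj2
  have hone : ∀ g : Ak K,
      MonoidAlgebra.mapDomain (conjPerm K σ)
          ((1 : MonoidAlgebra ℝ (Ak K)) - MonoidAlgebra.of ℝ (Ak K) g)
        = 1 - MonoidAlgebra.of ℝ (Ak K) (conjPerm K σ g) :=
    fun g => mapDomain_one_sub_of (cHom K σ) g
  have hmul : ∀ x y : MonoidAlgebra ℝ (Ak K),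
      MonoidAlgebra.mapDomain (conjPerm K σ) (x * y)
        = MonoidAlgebra.mapDomain (conjPerm K σ) x * MonoidAlgebra.mapDomain (conjPerm K σ) y :=
    fun x y => MonoidAlgebra.mapDomain_mul (cHom K σ) x y
  have hadd : ∀ x y : MonoidAlgebra ℝ (Ak K),
      MonoidAlgebra.mapDomain (conjPerm K σ) (x + y)
        = MonoidAlgebra.mapDomain (conjPerm K σ) x + MonoidAlgebra.mapDomain (conjPerm K σ) y :=
    fun x y => MonoidAlgebra.mapDomain_add _ x y
  have hinv : ∀ g : Ak K, conjPerm K σ g⁻¹ = (conjPerm K σ g)⁻¹ :=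
    fun g => map_inv (cHom K σ) g
  rw [Del_eq, Del_eq, hadd, hmul, hmul, hone, hone, hone, hone, hinv, hinv,
    conjPerm_Lg σ i j hj (extPerm_ne_zero σ hj), conjPerm_Rg σ i j hj (extPerm_ne_zero σ hj)]

end Conj

section Terms

variable {K : ℕ}

/-- `Δ_{ab}` for reduced indices `a b : Fin K`. -/
def DelR (K : ℕ) (a b : Fin K) : MonoidAlgebra ℝ (Ak K) :=
  Del K (idx le_rfl a) (idx le_rfl b) (idx_ne_zero le_rfl b)

/-- The Adj term. -/
def TA (K : ℕ) (a b c : Fin K) : MonoidAlgebra ℝ (Ak K) :=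
  DelR K a b * (DelR K a c + DelR K c a + DelR K b c + DelR K c b)

/-- The Opp term. -/
def TO (K : ℕ) (a b c d : Fin K) : MonoidAlgebra ℝ (Ak K) :=
  DelR K a b * DelR K c d

lemma extPerm_idx (σ : Equiv.Perm (Fin K)) (a : Fin K) :
    extPerm K σ (idx le_rfl a) = idx le_rfl (σ a) := by
  have h1 : idx (le_rfl : K ≤ K) a = a.succ := Fin.ext rfl
  have h2 : idx (le_rfl : K ≤ K) (σ a) = (σ a).succ := Fin.ext rfl
  rw [h1, h2, extPerm_succ]

lemma mapDomain_conj_DelR (σ : Equiv.Perm (Fin K)) (a b : Fin K) :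
    MonoidAlgebra.mapDomain (conjPerm K σ) (DelR K a b) = DelR K (σ a) (σ b) :=
  mapDomain_conj_Del σ _ _ (extPerm_idx σ a) (extPerm_idx σ b)

lemma mapDomain_conj_TA (σ : Equiv.Perm (Fin K)) (a b c : Fin K) :
    MonoidAlgebra.mapDomain (conjPerm K σ) (TA K a b c) = TA K (σ a) (σ b) (σ c) := by
  have hmul : ∀ x y : MonoidAlgebra ℝ (Ak K),
      MonoidAlgebra.mapDomain (conjPerm K σ) (x * y)
        = MonoidAlgebra.mapDomain (conjPerm K σ) x * MonoidAlgebra.mapDomain (conjPerm K σ) y :=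
    fun x y => MonoidAlgebra.mapDomain_mul (cHom K σ) x y
  have hadd : ∀ x y : MonoidAlgebra ℝ (Ak K),
      MonoidAlgebra.mapDomain (conjPerm K σ) (x + y)
        = MonoidAlgebra.mapDomain (conjPerm K σ) x + MonoidAlgebra.mapDomain (conjPerm K σ) y :=
    fun x y => MonoidAlgebra.mapDomain_add _ x y
  simp only [TA, hmul, hadd, mapDomain_conj_DelR]

lemma mapDomain_conj_TO (σ : Equiv.Perm (Fin K)) (a b c d : Fin K) :
    MonoidAlgebra.mapDomain (conjPerm K σ) (TO K a b c d)
      = TO K (σ a) (σ b) (σ c) (σ d) := by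
  have hmul : ∀ x y : MonoidAlgebra ℝ (Ak K),
      MonoidAlgebra.mapDomain (conjPerm K σ) (x * y)
        = MonoidAlgebra.mapDomain (conjPerm K σ) x * MonoidAlgebra.mapDomain (conjPerm K σ) y :=
    fun x y => MonoidAlgebra.mapDomain_mul (cHom K σ) x y
  simp only [TO, hmul, mapDomain_conj_DelR]

lemma Del_congr {i j i' j' : Fin (K + 1)} (hj : j ≠ 0) (hj' : j' ≠ 0) (h1 : i = i')
    (h2 : j = j') : Del K i j hj = Del K i' j' hj' := by
  subst h1; subst h2; rfl

lemma Del_idx_castLE {m : ℕ} (h : m ≤ K) (i j : Fin m) :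
    Del K (idx h i) (idx h j) (idx_ne_zero h j)
      = DelR K (Fin.castLE h i) (Fin.castLE h j) :=
  Del_congr _ _ (Fin.ext rfl) (Fin.ext rfl)

lemma AdjN_emb (m : ℕ) (h : m ≤ K) :
    AdjN K m h = ∑ e : Fin 3 ↪ Fin m,
      TA K (Fin.castLE h (e 0)) (Fin.castLE h (e 1)) (Fin.castLE h (e 2)) := by
  rw [← sum_ite3 (fun i j l => TA K (Fin.castLE h i) (Fin.castLE h j) (Fin.castLE h l)), AdjN]
  refine Finset.sum_congr rfl fun i _ => Finset.sum_congr rfl fun j _ =>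
    Finset.sum_congr rfl fun l _ => ?_
  by_cases hd : i ≠ j ∧ i ≠ l ∧ j ≠ l
  · rw [if_pos hd, if_pos hd, TA, Del_idx_castLE, Del_idx_castLE, Del_idx_castLE,
      Del_idx_castLE, Del_idx_castLE]
  · rw [if_neg hd, if_neg hd]

lemma OppN_emb (m : ℕ) (h : m ≤ K) :
    OppN K m h = ∑ e : Fin 4 ↪ Fin m,
      TO K (Fin.castLE h (e 0)) (Fin.castLE h (e 1)) (Fin.castLE h (e 2))
        (Fin.castLE h (e 3)) := by
  rw [← sum_ite4 (fun i j l n => TO K (Fin.castLE h i) (Fin.castLE h j) (Fin.castLE h l)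
    (Fin.castLE h n)), OppN]
  refine Finset.sum_congr rfl fun i _ => Finset.sum_congr rfl fun j _ =>
    Finset.sum_congr rfl fun l _ => Finset.sum_congr rfl fun n _ => ?_
  by_cases hd : i ≠ j ∧ i ≠ l ∧ i ≠ n ∧ j ≠ l ∧ j ≠ n ∧ l ≠ n
  · rw [if_pos hd, if_pos hd, TO, Del_idx_castLE, Del_idx_castLE]
  · rw [if_neg hd, if_neg hd]

lemma castLE_self (a : Fin K) : Fin.castLE (le_rfl : K ≤ K) a = a := Fin.ext rfl

end Terms
end PRA


open PRA in
/-- For `4 ≤ k ≤ K`, in `ℝ[A_K]` one has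
`S(Adj_k^N) = (K−3)!·(k−2)·(k−1)·k·Adj_K^N` and
`S(Opp_k^N) = (K−4)!·(k−3)·(k−2)·(k−1)·k·Opp_K^N`. -/
theorem statement18 (K k : ℕ) (hk : 4 ≤ k) (hkK : k ≤ K) :
    symmize K (AdjN K k hkK)
        = (((K - 3).factorial * ((k - 2) * (k - 1) * k) : ℕ) : ℝ) • AdjN K K le_rfl ∧
      symmize K (OppN K k hkK)
        = (((K - 4).factorial * ((k - 3) * (k - 2) * (k - 1) * k) : ℕ) : ℝ) • OppN K K le_rfl := by
  have h3k : 3 ≤ k := by omega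
  have h4k : 4 ≤ k := hk
  constructor
  · -- the Adj identity
    have hmap : ∀ σ : Equiv.Perm (Fin K),
        MonoidAlgebra.mapDomain (conjPerm K σ) (AdjN K k hkK)
          = ∑ e : Fin 3 ↪ Fin k,
              TA K (σ (Fin.castLE hkK (e 0))) (σ (Fin.castLE hkK (e 1)))
                (σ (Fin.castLE hkK (e 2))) := by
      intro σ
      rw [AdjN_emb k hkK]
      refine (map_sum (MonoidAlgebra.mapDomainRingHom ℝ (cHom K σ)) _ _).trans ?_
      exact Finset.sum_congr rfl fun e _ => mapDomain_conj_TA σ _ _ _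
    have hAK : AdjN K K le_rfl
        = ∑ E : Fin 3 ↪ Fin K, TA K (E 0) (E 1) (E 2) := by
      rw [AdjN_emb K le_rfl]
      exact Finset.sum_congr rfl fun e _ => by rw [castLE_self, castLE_self, castLE_self]
    calc symmize K (AdjN K k hkK)
        = ∑ σ : Equiv.Perm (Fin K), ∑ e : Fin 3 ↪ Fin k,
            TA K (σ (Fin.castLE hkK (e 0))) (σ (Fin.castLE hkK (e 1)))
              (σ (Fin.castLE hkK (e 2))) := by
          rw [symmize]
          exact Finset.sum_congr rfl fun σ _ => hmap σ
      _ = ∑ e : Fin 3 ↪ Fin k, ∑ σ : Equiv.Perm (Fin K),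
            (fun E : Fin 3 ↪ Fin K => TA K (E 0) (E 1) (E 2))
              ((e.trans (Fin.castLEEmb hkK)).trans σ.toEmbedding) := Finset.sum_comm
      _ = ((K - 3).factorial * k.descFactorial 3) •
            ∑ E : Fin 3 ↪ Fin K, TA K (E 0) (E 1) (E 2) :=
          key_count h3k hkK (fun E : Fin 3 ↪ Fin K => TA K (E 0) (E 1) (E 2))
      _ = (((K - 3).factorial * ((k - 2) * (k - 1) * k) : ℕ) : ℝ) • AdjN K K le_rfl := by
          rw [hAK, Nat.cast_smul_eq_nsmul]
          congr 2
          simp only [Nat.descFactorial_succ, Nat.descFactorial_zero, Nat.mul_one, Nat.sub_zero]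
          ring
  · -- the Opp identity
    have hmap : ∀ σ : Equiv.Perm (Fin K),
        MonoidAlgebra.mapDomain (conjPerm K σ) (OppN K k hkK)
          = ∑ e : Fin 4 ↪ Fin k,
              TO K (σ (Fin.castLE hkK (e 0))) (σ (Fin.castLE hkK (e 1)))
                (σ (Fin.castLE hkK (e 2))) (σ (Fin.castLE hkK (e 3))) := by
      intro σ
      rw [OppN_emb k hkK]
      refine (map_sum (MonoidAlgebra.mapDomainRingHom ℝ (cHom K σ)) _ _).trans ?_
      exact Finset.sum_congr rfl fun e _ => mapDomain_conj_TO σ _ _ _ _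
    have hOK : OppN K K le_rfl
        = ∑ E : Fin 4 ↪ Fin K, TO K (E 0) (E 1) (E 2) (E 3) := by
      rw [OppN_emb K le_rfl]
      exact Finset.sum_congr rfl fun e _ => by
        rw [castLE_self, castLE_self, castLE_self, castLE_self]
    calc symmize K (OppN K k hkK)
        = ∑ σ : Equiv.Perm (Fin K), ∑ e : Fin 4 ↪ Fin k,
            TO K (σ (Fin.castLE hkK (e 0))) (σ (Fin.castLE hkK (e 1)))
              (σ (Fin.castLE hkK (e 2))) (σ (Fin.castLE hkK (e 3))) := by
          rw [symmize]
          exact Finset.sum_congr rfl fun σ _ => hmap σ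
      _ = ∑ e : Fin 4 ↪ Fin k, ∑ σ : Equiv.Perm (Fin K),
            (fun E : Fin 4 ↪ Fin K => TO K (E 0) (E 1) (E 2) (E 3))
              ((e.trans (Fin.castLEEmb hkK)).trans σ.toEmbedding) := Finset.sum_comm
      _ = ((K - 4).factorial * k.descFactorial 4) •
            ∑ E : Fin 4 ↪ Fin K, TO K (E 0) (E 1) (E 2) (E 3) :=
          key_count h4k hkK (fun E : Fin 4 ↪ Fin K => TO K (E 0) (E 1) (E 2) (E 3))
      _ = (((K - 4).factorial * ((k - 3) * (k - 2) * (k - 1) * k) : ℕ) : ℝ) •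
            OppN K K le_rfl := by
          rw [hOK, Nat.cast_smul_eq_nsmul]
          congr 2
          simp only [Nat.descFactorial_succ, Nat.descFactorial_zero, Nat.mul_one, Nat.sub_zero]
          ring
end
end
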